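/- arXiv:2205.09851 — 4 statements merged into one kernel-verified Lean document; each statement's English description precedes it below -/
import Mathlib

section
/- For every sequence (v_k) of vectors in a vector space X equipped with a function ‖·‖: X → [0,∞] satisfying the quasi-triangle inequality ‖v+w‖ ≤ C(‖v‖+‖w‖) for some constant C ≥ 1, there exists a constant C' depending only on C such that for every K ∈ ℕ, ‖∑_{k=1}^K v_k‖ ≤ C' ∑_{k=1}^K k^{C'} ‖v_k‖. -/
open scoped ENNReal NNReal

universe u

section Aux

variable {X : Type u} [AddCommGroup X] [Module ℝ X] {C : ℝ≥0∞}

lemma qn_zero (nn : X → ℝ≥0∞)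
    (hH : ∀ (a : ℝ) (v : X), nn (a • v) = (‖a‖₊ : ℝ≥0∞) * nn v) : nn 0 = 0 := by
  have := hH 0 0
  simpa using this

/-- Binary-splitting bound: a sum over an interval of length `≤ 2^n` costs `C^n`. -/
lemma qn_sum_Ico_pow (nn : X → ℝ≥0∞) (hC : 1 ≤ C)
    (hH : ∀ (a : ℝ) (v : X), nn (a • v) = (‖a‖₊ : ℝ≥0∞) * nn v)
    (hQ : ∀ v w : X, nn (v + w) ≤ C * (nn v + nn w)) :
    ∀ (n a b : ℕ), b ≤ a + 2 ^ n → ∀ w : ℕ → X,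
      nn (∑ k ∈ Finset.Ico a b, w k) ≤ C ^ n * ∑ k ∈ Finset.Ico a b, nn (w k) := by
  intro n
  induction n with
  | zero =>
    intro a b hb w
    rcases Nat.lt_or_ge a b with h | h
    · have hba : b = a + 1 := by omega
      subst hba
      simp
    · rw [Finset.Ico_eq_empty (by omega)]
      simp [qn_zero nn hH]
  | succ n ih =>
    intro a b hb w
    rcases le_or_gt b (a + 2 ^ n) with h | h
    · calc nn (∑ k ∈ Finset.Ico a b, w k)
          ≤ C ^ n * ∑ k ∈ Finset.Ico a b, nn (w k) := ih a b h w
        _ ≤ C ^ (n + 1) * ∑ k ∈ Finset.Ico a b, nn (w k) := by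
            gcongr
            exact Nat.le_succ n
    · have h1 : a ≤ a + 2 ^ n := Nat.le_add_right _ _
      have h2 : a + 2 ^ n ≤ b := h.le
      have hb' : b ≤ (a + 2 ^ n) + 2 ^ n := by
        have : 2 ^ (n + 1) = 2 ^ n + 2 ^ n := by ring
        omega
      rw [← Finset.sum_Ico_consecutive _ h1 h2]
      calc nn (∑ k ∈ Finset.Ico a (a + 2 ^ n), w k + ∑ k ∈ Finset.Ico (a + 2 ^ n) b, w k)
          ≤ C * (nn (∑ k ∈ Finset.Ico a (a + 2 ^ n), w k)
              + nn (∑ k ∈ Finset.Ico (a + 2 ^ n) b, w k)) := hQ _ _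
        _ ≤ C * (C ^ n * ∑ k ∈ Finset.Ico a (a + 2 ^ n), nn (w k)
              + C ^ n * ∑ k ∈ Finset.Ico (a + 2 ^ n) b, nn (w k)) := by
            gcongr
            · exact ih a _ le_rfl w
            · exact ih _ b hb' w
        _ = C ^ (n + 1) * (∑ k ∈ Finset.Ico a (a + 2 ^ n), nn (w k)
              + ∑ k ∈ Finset.Ico (a + 2 ^ n) b, nn (w k)) := by ring
        _ = C ^ (n + 1) * ∑ k ∈ Finset.Ico a b, nn (w k) := by
            rw [Finset.sum_Ico_consecutive _ h1 h2]

/-- Front-peeling bound: term `j` of a sum over `Ico a (a+n)` costs `C^(j+1-a)`. -/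
lemma qn_sum_geom (nn : X → ℝ≥0∞) (_hC : 1 ≤ C)
    (hH : ∀ (a : ℝ) (v : X), nn (a • v) = (‖a‖₊ : ℝ≥0∞) * nn v)
    (hQ : ∀ v w : X, nn (v + w) ≤ C * (nn v + nn w)) :
    ∀ (n a : ℕ) (u : ℕ → X),
      nn (∑ j ∈ Finset.Ico a (a + n), u j) ≤
        ∑ j ∈ Finset.Ico a (a + n), C ^ (j + 1 - a) * nn (u j) := by
  intro n
  induction n with
  | zero => intro a u; simp [qn_zero nn hH]
  | succ n ih =>
    intro a u
    have hsplit : ∀ f : ℕ → ℝ≥0∞,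
        ∑ j ∈ Finset.Ico a (a + (n + 1)), f j
          = f a + ∑ j ∈ Finset.Ico (a + 1) (a + (n + 1)), f j := by
      intro f
      rw [← Finset.sum_Ico_consecutive f (by omega : a ≤ a + 1) (by omega : a + 1 ≤ a + (n+1))]
      congr 1
      rw [Nat.Ico_succ_singleton, Finset.sum_singleton]
    have hsplitX : ∑ j ∈ Finset.Ico a (a + (n + 1)), u j
        = u a + ∑ j ∈ Finset.Ico (a + 1) (a + (n + 1)), u j := by
      rw [← Finset.sum_Ico_consecutive u (by omega : a ≤ a + 1) (by omega : a + 1 ≤ a + (n+1))]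
      congr 1
      rw [Nat.Ico_succ_singleton, Finset.sum_singleton]
    rw [hsplitX, hsplit (fun j => C ^ (j + 1 - a) * nn (u j))]
    have h2 : a + (n + 1) = (a + 1) + n := by omega
    calc nn (u a + ∑ j ∈ Finset.Ico (a + 1) (a + (n + 1)), u j)
        ≤ C * (nn (u a) + nn (∑ j ∈ Finset.Ico (a + 1) (a + (n + 1)), u j)) := hQ _ _
      _ ≤ C * (nn (u a) + ∑ j ∈ Finset.Ico (a + 1) (a + (n + 1)), C ^ (j + 1 - (a+1)) * nn (u j)) := by
          gcongr
          rw [h2]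
          exact ih (a + 1) u
      _ = C * nn (u a) + ∑ j ∈ Finset.Ico (a + 1) (a + (n + 1)), C * (C ^ (j - a) * nn (u j)) := by
          rw [mul_add, Finset.mul_sum]
          congr 1
          apply Finset.sum_congr rfl
          intro j hj
          simp only [Finset.mem_Ico] at hj
          have he : j + 1 - (a + 1) = j - a := by omega
          rw [he]
      _ = C ^ (a + 1 - a) * nn (u a)
            + ∑ j ∈ Finset.Ico (a + 1) (a + (n + 1)), C ^ (j + 1 - a) * nn (u j) := by
          congr 1
          · congr 1
            simp
          · apply Finset.sum_congr rfl
            intro j hj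
            simp only [Finset.mem_Ico] at hj
            rw [← mul_assoc, ← pow_succ']
            have he : j - a + 1 = j + 1 - a := by omega
            rw [he]

end Aux

/-- For every quasi-norm `nn` on a vector space `X` with quasi-triangle
constant `C ≥ 1`, there is a constant `C'` depending only on `C` such that for every `K`,
`‖∑_{k=1}^K v_k‖ ≤ C' ∑_{k=1}^K k^{C'} ‖v_k‖`. -/
theorem quasinorm_multi_triangle (C : ℝ≥0∞) (hC : 1 ≤ C) (hCtop : C ≠ ⊤) :
    ∃ C' : ℝ, 0 < C' ∧
      ∀ (X : Type u) [AddCommGroup X] [Module ℝ X] (nn : X → ℝ≥0∞),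
        (∀ (a : ℝ) (v : X), nn (a • v) = (‖a‖₊ : ℝ≥0∞) * nn v) →
        (∀ v w : X, nn (v + w) ≤ C * (nn v + nn w)) →
        ∀ (K : ℕ) (v : ℕ → X),
          nn (∑ k ∈ Finset.Icc 1 K, v k) ≤
            ENNReal.ofReal C' * ∑ k ∈ Finset.Icc 1 K, (k : ℝ≥0∞) ^ C' * nn (v k) := by
  have hc1 : 1 ≤ C.toReal := by
    have := ENNReal.toReal_mono hCtop hC
    simpa using this
  set c := C.toReal with hcdef
  have hlog : 0 ≤ Real.logb 2 c := Real.logb_nonneg one_lt_two hc1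
  set C' : ℝ := c + 2 * Real.logb 2 c with hC'def
  have hC'1 : 1 ≤ C' := by rw [hC'def]; linarith
  have hC'pos : 0 < C' := by linarith
  -- key scalar bound: C^(j+1) * C^j ≤ ofReal C' * k^C'  whenever 2^j ≤ k
  have hkey : ∀ (j k : ℕ), 2 ^ j ≤ k →
      C ^ (j + 1) * C ^ j ≤ ENNReal.ofReal C' * (k : ℝ≥0∞) ^ C' := by
    intro j k hjk
    have hCofReal : C = ENNReal.ofReal c := (ENNReal.ofReal_toReal hCtop).symm
    have hCleC' : C ≤ ENNReal.ofReal C' := by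
      rw [hCofReal]
      exact ENNReal.ofReal_le_ofReal (by rw [hC'def]; linarith)
    have hcpos : (0:ℝ) < c := by linarith
    have hreal : c ^ 2 ≤ (2:ℝ) ^ C' := by
      have h1 : (2:ℝ) ^ (2 * Real.logb 2 c) ≤ (2:ℝ) ^ C' :=
        Real.rpow_le_rpow_of_exponent_le one_le_two (by rw [hC'def]; linarith)
      have h2 : (2:ℝ) ^ (2 * Real.logb 2 c) = c ^ 2 := by
        rw [show (2:ℝ) * Real.logb 2 c = Real.logb 2 (c ^ 2) by
          rw [Real.logb_pow]; push_cast; ring]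
        exact Real.rpow_logb (by norm_num) (by norm_num) (by positivity)
      linarith [h1, h2.symm.le]
    have hC2 : C ^ 2 ≤ (2:ℝ≥0∞) ^ C' := by
      have : (2:ℝ≥0∞) ^ C' = ENNReal.ofReal ((2:ℝ) ^ C') := by
        rw [← ENNReal.ofReal_rpow_of_pos (by norm_num : (0:ℝ) < 2)]
        norm_num
      rw [this, hCofReal, ← ENNReal.ofReal_pow hcpos.le]
      exact ENNReal.ofReal_le_ofReal hreal
    have hpow : ((2:ℝ≥0∞) ^ C') ^ j ≤ (k : ℝ≥0∞) ^ C' := by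
      have h1 : ((2:ℝ≥0∞) ^ C') ^ j = ((2:ℝ≥0∞) ^ j) ^ C' := by
        rw [← ENNReal.rpow_natCast ((2:ℝ≥0∞) ^ C') j, ← ENNReal.rpow_mul,
          ← ENNReal.rpow_natCast (2:ℝ≥0∞) j, ← ENNReal.rpow_mul, mul_comm]
      rw [h1]
      apply ENNReal.rpow_le_rpow _ hC'pos.le
      have : ((2:ℝ≥0∞) ^ j) = ((2 ^ j : ℕ) : ℝ≥0∞) := by push_cast; ring
      rw [this]
      exact_mod_cast Nat.cast_le.mpr hjk
    calc C ^ (j + 1) * C ^ j = C * (C ^ 2) ^ j := by ring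
      _ ≤ ENNReal.ofReal C' * ((2:ℝ≥0∞) ^ C') ^ j :=
          mul_le_mul' hCleC' (pow_le_pow_left' hC2 j)
      _ ≤ ENNReal.ofReal C' * (k : ℝ≥0∞) ^ C' := by gcongr
  refine ⟨C', hC'pos, ?_⟩
  intro X _ _ nn hH hQ K v
  have nn0 : nn 0 = 0 := qn_zero nn hH
  -- fibers by Nat.log 2
  set S : ℕ → Finset ℕ := fun j => (Finset.Icc 1 K).filter (fun k => Nat.log 2 k = j) with hSdef
  have hmaps : ∀ k ∈ Finset.Icc 1 K, Nat.log 2 k ∈ Finset.Ico 0 (0 + (K + 1)) := by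
    intro k hk
    simp only [Finset.mem_Icc] at hk
    have := Nat.log_le_self 2 k
    simp only [Finset.mem_Ico]
    omega
  have hfib : ∀ f : ℕ → ℝ≥0∞,
      ∑ j ∈ Finset.Ico 0 (0 + (K + 1)), ∑ k ∈ S j, f k = ∑ k ∈ Finset.Icc 1 K, f k := by
    intro f
    exact Finset.sum_fiberwise_of_maps_to hmaps f
  have hfibX : ∑ j ∈ Finset.Ico 0 (0 + (K + 1)), ∑ k ∈ S j, v k = ∑ k ∈ Finset.Icc 1 K, v k :=
    Finset.sum_fiberwise_of_maps_to hmaps v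
  have hSsub : ∀ j, S j ⊆ Finset.Ico (2 ^ j) (2 ^ (j + 1)) := by
    intro j k hk
    simp only [hSdef, Finset.mem_filter, Finset.mem_Icc] at hk
    obtain ⟨⟨hk1, -⟩, hlogk⟩ := hk
    simp only [Finset.mem_Ico]
    constructor
    · rw [← hlogk]; exact Nat.pow_log_le_self 2 (by omega)
    · rw [← hlogk]; exact Nat.lt_pow_succ_log_self (by norm_num) k
  have hSk : ∀ j, ∀ k ∈ S j, 2 ^ j ≤ k := fun j k hk => (Finset.mem_Ico.mp (hSsub j hk)).1
  -- block bound
  have hblock : ∀ j, nn (∑ k ∈ S j, v k) ≤ C ^ j * ∑ k ∈ S j, nn (v k) := by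
    intro j
    set w : ℕ → X := fun k => if k ∈ S j then v k else 0 with hwdef
    have hsum : ∑ k ∈ S j, v k = ∑ k ∈ Finset.Ico (2 ^ j) (2 ^ (j + 1)), w k := by
      rw [hwdef]
      simp only [Finset.sum_ite_mem]
      rw [Finset.inter_eq_right.mpr (hSsub j)]
    have hsum' : ∑ k ∈ Finset.Ico (2 ^ j) (2 ^ (j + 1)), nn (w k) = ∑ k ∈ S j, nn (v k) := by
      have : ∀ k, nn (w k) = if k ∈ S j then nn (v k) else 0 := by
        intro k
        rw [hwdef]
        by_cases h : k ∈ S j <;> simp [h, nn0]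
      simp only [this, Finset.sum_ite_mem]
      rw [Finset.inter_eq_right.mpr (hSsub j)]
    rw [hsum, ← hsum']
    exact qn_sum_Ico_pow nn hC hH hQ j (2 ^ j) (2 ^ (j + 1)) (by rw [pow_succ]; omega) w
  -- combine
  calc nn (∑ k ∈ Finset.Icc 1 K, v k)
      = nn (∑ j ∈ Finset.Ico 0 (0 + (K + 1)), ∑ k ∈ S j, v k) := by rw [hfibX]
    _ ≤ ∑ j ∈ Finset.Ico 0 (0 + (K + 1)), C ^ (j + 1 - 0) * nn (∑ k ∈ S j, v k) :=
        qn_sum_geom nn hC hH hQ (K + 1) 0 _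
    _ ≤ ∑ j ∈ Finset.Ico 0 (0 + (K + 1)), C ^ (j + 1) * (C ^ j * ∑ k ∈ S j, nn (v k)) := by
        apply Finset.sum_le_sum
        intro j hj
        simp only [Nat.sub_zero]
        gcongr
        exact hblock j
    _ = ∑ j ∈ Finset.Ico 0 (0 + (K + 1)), ∑ k ∈ S j, (C ^ (j + 1) * C ^ j) * nn (v k) := by
        apply Finset.sum_congr rfl
        intro j hj
        rw [← mul_assoc, Finset.mul_sum]
    _ ≤ ∑ j ∈ Finset.Ico 0 (0 + (K + 1)), ∑ k ∈ S j,
          (ENNReal.ofReal C' * (k : ℝ≥0∞) ^ C') * nn (v k) := by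
        apply Finset.sum_le_sum
        intro j hj
        apply Finset.sum_le_sum
        intro k hk
        exact mul_le_mul_left (hkey j k (hSk j k hk)) _
    _ = ENNReal.ofReal C' * ∑ k ∈ Finset.Icc 1 K, (k : ℝ≥0∞) ^ C' * nn (v k) := by
        rw [hfib (fun k => (ENNReal.ofReal C' * (k : ℝ≥0∞) ^ C') * nn (v k)), Finset.mul_sum]
        apply Finset.sum_congr rfl
        intro k hk
        ring
end

section
/- Outer Hölder inequality: let Π be an M-linear map between outer Lebesgue spaces satisfying the size Hölder bound ‖Π(F₁,…,F_M)‖_{S₀} ≤ C ∏_{j=1}^M ‖F_j‖_{S_j} and the support bound μ₀(‖Π(F₁,…,F_M)‖_{S₀} > 0) ≤ min_j μ_j(‖F_j‖_{S_j} > 0). Then for all (p₁,…,p_M) ∈ (0,∞]^M and p₀ with 1/p₀ = ∑_j 1/p_j, one has ‖Π(F₁,…,F_M)‖_{L^{p₀}_{μ₀} S₀} ≲ C ∏_{j=1}^M ‖F_j‖_{L^{p_j}_{μ_j} S_j}. -/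
open MeasureTheory
open scoped ENNReal NNReal

universe u

/-- Countable unions of elements of the generating collection `B`. -/
def BUnionSets {X : Type u} (B : Set (Set X)) : Set (Set X) :=
  {E | ∃ f : ℕ → Set X, (∀ n, f n ∈ B) ∧ E = ⋃ n, f n}

/-- `(X, B, μ)` is an outer space: `B` is a σ-generating collection of sets of finite
outer measure whose coverings recover `μ`. -/
structure IsOuterSpace {X : Type u} (B : Set (Set X)) (μ : OuterMeasure X) : Prop where
  covers : ∃ f : ℕ → Set X, (∀ n, f n ∈ B) ∧ ⋃ n, f n = Set.univ
  finite : ∀ A ∈ B, μ A ≠ ⊤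
  recover : ∀ E : Set X,
    μ E = ⨅ (f : ℕ → Set X) (_ : ∀ n, f n ∈ B) (_ : E ⊆ ⋃ n, f n), ∑' n, μ (f n)

/-- `S` is a size with quasi-triangle constant `C`: a homogeneous quasi-norm on
functions, monotone under restriction to complements of countable unions of
generating sets. -/
structure IsSizeWith {X : Type u} (C : ℝ≥0∞) (B : Set (Set X))
    (S : (X → ℂ) → ℝ≥0∞) : Prop where
  tri : ∀ F G : X → ℂ, S (F + G) ≤ C * (S F + S G)
  homog : ∀ (c : ℂ) (F : X → ℂ), S (fun x => c * F x) = (‖c‖₊ : ℝ≥0∞) * S F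
  mono : ∀ (F : X → ℂ) (E : Set X), E ∈ BUnionSets B → S (Set.indicator Eᶜ F) ≤ S F

/-- The super-level measure `μ(‖F‖_S > λ)`. -/
noncomputable def slm {X : Type u} (μ : OuterMeasure X) (B : Set (Set X))
    (S : (X → ℂ) → ℝ≥0∞) (F : X → ℂ) (lam : ℝ≥0∞) : ℝ≥0∞ :=
  ⨅ (E : Set X) (_ : E ∈ BUnionSets B) (_ : S (Set.indicator Eᶜ F) ≤ lam), μ E

/-- The outer Lebesgue quasi-norm `‖F‖_{L^p_μ S}` for `p ∈ (0,∞)`. -/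
noncomputable def oLp {X : Type u} (μ : OuterMeasure X) (B : Set (Set X))
    (S : (X → ℂ) → ℝ≥0∞) (p : ℝ) (F : X → ℂ) : ℝ≥0∞ :=
  (∫⁻ lam in Set.Ioi (0 : ℝ), slm μ B S F (ENNReal.ofReal lam ^ (1 / p))) ^ (1 / p)

/-- The weak outer Lebesgue quasi-norm `‖F‖_{L^{p,∞}_μ S}` for `p ∈ (0,∞)`. -/
noncomputable def oLpW {X : Type u} (μ : OuterMeasure X) (B : Set (Set X))
    (S : (X → ℂ) → ℝ≥0∞) (p : ℝ) (F : X → ℂ) : ℝ≥0∞ :=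
  (⨆ (lam : ℝ) (_ : 0 < lam),
    ENNReal.ofReal lam * slm μ B S F (ENNReal.ofReal lam ^ (1 / p))) ^ (1 / p)

/-- Outer Lebesgue quasi-norm with exponent `p ∈ (0,∞]` (with `‖F‖_{L^∞_μ S} = S F`). -/
noncomputable def oLpE {X : Type u} (μ : OuterMeasure X) (B : Set (Set X))
    (S : (X → ℂ) → ℝ≥0∞) (p : ℝ≥0∞) (F : X → ℂ) : ℝ≥0∞ :=
  if p = ⊤ then S F else oLp μ B S p.toReal F

/-- Weak outer Lebesgue quasi-norm with exponent `p ∈ (0,∞]`. -/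
noncomputable def oLpWE {X : Type u} (μ : OuterMeasure X) (B : Set (Set X))
    (S : (X → ℂ) → ℝ≥0∞) (p : ℝ≥0∞) (F : X → ℂ) : ℝ≥0∞ :=
  if p = ⊤ then S F else oLpW μ B S p.toReal F

section Helpers

variable {X : Type u} {B : Set (Set X)} {μ : OuterMeasure X} {S : (X → ℂ) → ℝ≥0∞} {CS : ℝ≥0∞}

theorem BUnionSets.union_mem {E₁ E₂ : Set X} (h₁ : E₁ ∈ BUnionSets B)
    (h₂ : E₂ ∈ BUnionSets B) : E₁ ∪ E₂ ∈ BUnionSets B := by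
  obtain ⟨f₁, hf₁, rfl⟩ := h₁
  obtain ⟨f₂, hf₂, rfl⟩ := h₂
  refine ⟨fun n => if Even n then f₁ (n / 2) else f₂ (n / 2), fun n => ?_, ?_⟩
  · by_cases h : Even n <;> simp [h, hf₁, hf₂]
  · ext x
    simp only [Set.mem_union, Set.mem_iUnion]
    constructor
    · rintro (⟨n, hn⟩ | ⟨n, hn⟩)
      · exact ⟨2 * n, by simpa [Nat.mul_div_cancel_left n (by norm_num : 0 < 2)] using hn⟩
      · refine ⟨2 * n + 1, ?_⟩
        have he : ¬ Even (2 * n + 1) := by simp [Nat.even_add_one, Nat.even_mul]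
        have : (2 * n + 1) / 2 = n := by omega
        simpa [he, this] using hn
    · rintro ⟨n, hn⟩
      by_cases h : Even n
      · exact Or.inl ⟨n / 2, by simpa [h] using hn⟩
      · exact Or.inr ⟨n / 2, by simpa [h] using hn⟩

theorem BUnionSets.iUnion_mem {D : ℕ → Set X} (hD : ∀ n, D n ∈ BUnionSets B) :
    (⋃ n, D n) ∈ BUnionSets B := by
  choose g hg hDg using hD
  refine ⟨fun n => g (Nat.unpair n).1 (Nat.unpair n).2, fun n => hg _ _, ?_⟩
  ext x
  simp only [Set.mem_iUnion]
  constructor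
  · rintro ⟨n, hn⟩
    rw [hDg n] at hn
    obtain ⟨m, hm⟩ := Set.mem_iUnion.1 hn
    exact ⟨Nat.pair n m, by simpa [Nat.unpair_pair] using hm⟩
  · rintro ⟨n, hn⟩
    exact ⟨(Nat.unpair n).1, by rw [hDg]; exact Set.mem_iUnion.2 ⟨(Nat.unpair n).2, hn⟩⟩

theorem BUnionSets.union_biUnion_mem {ι : Type*} {U : Set X} (hU : U ∈ BUnionSets B)
    (t : Finset ι) (D : ι → Set X) (hD : ∀ i ∈ t, D i ∈ BUnionSets B) :
    (U ∪ ⋃ i ∈ t, D i) ∈ BUnionSets B := by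
  classical
  induction t using Finset.induction_on with
  | empty => simpa using hU
  | @insert a s ha ih =>
      have h1 : (U ∪ ⋃ i ∈ s, D i) ∈ BUnionSets B := ih fun i hi => hD i (Finset.mem_insert_of_mem hi)
      have h2 : D a ∈ BUnionSets B := hD a (Finset.mem_insert_self a s)
      have : (U ∪ ⋃ i ∈ insert a s, D i) = (U ∪ ⋃ i ∈ s, D i) ∪ D a := by
        simp only [Finset.set_biUnion_insert]
        rw [Set.union_comm (D a) _, Set.union_assoc]
      rw [this]
      exact BUnionSets.union_mem h1 h2

theorem IsSizeWith.size_zero (hS : IsSizeWith CS B S) : S 0 = 0 := by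
  have h := hS.homog 0 0
  simp at h; exact h

theorem IsSizeWith.size_indicator_compl_le (hS : IsSizeWith CS B S) {A D : Set X} (hAD : A ⊆ D)
    (hD : D ∈ BUnionSets B) (F : X → ℂ) :
    S (Set.indicator Dᶜ F) ≤ S (Set.indicator Aᶜ F) := by
  have h := hS.mono (Set.indicator Aᶜ F) D hD
  rwa [Set.indicator_indicator, Set.inter_eq_self_of_subset_left
    (Set.compl_subset_compl.2 hAD)] at h

theorem indicator_sum_eq {ι : Type*} (s : Set X) (t : Finset ι) (f : ι → X → ℂ) :
    Set.indicator s (∑ i ∈ t, f i) = ∑ i ∈ t, Set.indicator s (f i) := by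
  funext x
  by_cases hx : x ∈ s
  · simp [Set.indicator_of_mem hx, Finset.sum_apply]
  · simp [Set.indicator_of_notMem hx]

theorem IsSizeWith.size_sum_le (hS : IsSizeWith CS B S) (hCS : 1 ≤ CS) {ι : Type*}
    (t : Finset ι) (G : ι → X → ℂ) :
    S (∑ i ∈ t, G i) ≤ CS ^ t.card * ∑ i ∈ t, S (G i) := by
  classical
  induction t using Finset.induction_on with
  | empty => simp [hS.size_zero]
  | @insert a s ha ih =>
      rw [Finset.sum_insert ha]
      calc S (G a + ∑ i ∈ s, G i) ≤ CS * (S (G a) + S (∑ i ∈ s, G i)) := hS.tri _ _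
        _ ≤ CS * (S (G a) + CS ^ s.card * ∑ i ∈ s, S (G i)) := by
            gcongr
        _ ≤ CS * (CS ^ s.card * S (G a) + CS ^ s.card * ∑ i ∈ s, S (G i)) := by
            gcongr
            exact le_mul_of_one_le_left (zero_le) (one_le_pow_of_one_le' hCS _)
        _ = CS ^ (insert a s).card * (S (G a) + ∑ i ∈ s, S (G i)) := by
            rw [Finset.card_insert_of_notMem ha, ← mul_add, pow_succ]
            ring
        _ = CS ^ (insert a s).card * ∑ i ∈ insert a s, S (G i) := by
            rw [Finset.sum_insert ha]

theorem slm_anti (F : X → ℂ) : Antitone (slm μ B S F) := by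
  intro l₁ l₂ h
  exact iInf_mono fun E => iInf_mono fun hE => iInf_mono' fun hl => ⟨le_trans hl h, le_rfl⟩

theorem slm_le {E : Set X} {F : X → ℂ} {lam : ℝ≥0∞} (hE : E ∈ BUnionSets B)
    (h : S (Set.indicator Eᶜ F) ≤ lam) : slm μ B S F lam ≤ μ E := by
  exact iInf₂_le_of_le E hE (iInf_le_of_le h le_rfl)

theorem exists_of_slm_lt {F : X → ℂ} {lam r : ℝ≥0∞} (h : slm μ B S F lam < r) :
    ∃ E ∈ BUnionSets B, S (Set.indicator Eᶜ F) ≤ lam ∧ μ E < r := by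
  simp only [slm, iInf_lt_iff] at h
  obtain ⟨E, hE, hl, hr⟩ := h
  exact ⟨E, hE, hl, hr⟩

theorem IsOuterSpace.exists_small (hB : IsOuterSpace B μ) {ε : ℝ≥0∞} (hε : 0 < ε) :
    ∃ U ∈ BUnionSets B, μ U ≤ ε := by
  have h0 : μ (∅ : Set X) = 0 := measure_empty
  rw [hB.recover ∅] at h0
  have hlt : (⨅ (f : ℕ → Set X) (_ : ∀ n, f n ∈ B) (_ : (∅ : Set X) ⊆ ⋃ n, f n),
      ∑' n, μ (f n)) < ε := by rw [← h0] at hε; exact hε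
  simp only [iInf_lt_iff] at hlt
  obtain ⟨f, hf, _, hsum⟩ := hlt
  exact ⟨⋃ n, f n, ⟨f, hf, rfl⟩, le_trans (measure_iUnion_le f) hsum.le⟩

theorem slm_eq_zero_of_size_zero (hB : IsOuterSpace B μ) (hS : IsSizeWith CS B S)
    {F : X → ℂ} (h : S F = 0) (lam : ℝ≥0∞) : slm μ B S F lam = 0 := by
  refine le_antisymm ?_ (zero_le)
  refine ENNReal.le_of_forall_pos_le_add fun ε hε _ => ?_
  obtain ⟨U, hU, hUε⟩ := hB.exists_small (ε := ε) (by exact_mod_cast hε)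
  have : S (Set.indicator Uᶜ F) ≤ lam := le_trans (le_trans (hS.mono F U hU) h.le) (zero_le)
  calc slm μ B S F lam ≤ μ U := slm_le hU this
    _ ≤ ε := hUε
    _ ≤ 0 + ε := by rw [zero_add]

theorem slm_indicator_le (hS : IsSizeWith CS B S) {E : Set X} (hE : E ∈ BUnionSets B)
    (F : X → ℂ) : slm μ B S (Set.indicator E F) 0 ≤ μ E := by
  refine slm_le hE ?_
  rw [Set.indicator_indicator, Set.compl_inter_self, Set.indicator_empty]
  exact hS.size_zero.le

end Helpers
section Helpers2

variable {X : Type u} {B : Set (Set X)} {μ : OuterMeasure X} {S : (X → ℂ) → ℝ≥0∞} {CS : ℝ≥0∞}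

theorem slm_integrand_antitone (F : X → ℂ) {r : ℝ} (hr : 0 < r) :
    Antitone (fun t : ℝ => slm μ B S F (ENNReal.ofReal t ^ (1 / r))) := by
  intro t₁ t₂ h
  refine slm_anti F ?_
  exact ENNReal.rpow_le_rpow (ENNReal.ofReal_le_ofReal h) (by positivity)

theorem slm_zero_of_oLp_zero {F : X → ℂ} {r : ℝ} (hr : 0 < r)
    (h : oLp μ B S r F = 0) : ∀ lam : ℝ≥0∞, 0 < lam → slm μ B S F lam = 0 := by
  have hI : (∫⁻ t in Set.Ioi (0 : ℝ), slm μ B S F (ENNReal.ofReal t ^ (1 / r))) = 0 := by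
    have := h
    rw [oLp, ENNReal.rpow_eq_zero_iff] at this
    rcases this with ⟨h1, _⟩ | ⟨_, h2⟩
    · exact h1
    · exfalso; simp at h2; linarith
  -- first handle finite lam
  have key : ∀ lam : ℝ≥0∞, 0 < lam → lam ≠ ⊤ → slm μ B S F lam = 0 := by
    intro lam hlam hlamtop
    by_contra hc
    have hcpos : 0 < slm μ B S F lam := pos_iff_ne_zero.2 hc
    set a : ℝ := (lam ^ r).toReal with ha
    have hlr0 : lam ^ r ≠ 0 := by
      simp only [ne_eq, ENNReal.rpow_eq_zero_iff, not_or]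
      constructor
      · rintro ⟨h1, _⟩; exact hlam.ne' h1
      · rintro ⟨h1, _⟩; exact hlamtop h1
    have hlrtop : lam ^ r ≠ ⊤ := ENNReal.rpow_ne_top_of_nonneg hr.le hlamtop
    have hapos : 0 < a := ENNReal.toReal_pos hlr0 hlrtop
    have hlower : ∀ t ∈ Set.Ioc (0 : ℝ) a,
        slm μ B S F lam ≤ slm μ B S F (ENNReal.ofReal t ^ (1 / r)) := by
      intro t ht
      refine slm_anti F ?_
      have h1 : ENNReal.ofReal t ≤ lam ^ r := ENNReal.ofReal_le_of_le_toReal ht.2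
      calc ENNReal.ofReal t ^ (1 / r) ≤ (lam ^ r) ^ (1 / r) :=
            ENNReal.rpow_le_rpow h1 (by positivity)
        _ = lam := by rw [one_div, ENNReal.rpow_rpow_inv hr.ne']
    have hIoc : (∫⁻ t in Set.Ioc (0 : ℝ) a, slm μ B S F (ENNReal.ofReal t ^ (1 / r)))
        ≤ ∫⁻ t in Set.Ioi (0 : ℝ), slm μ B S F (ENNReal.ofReal t ^ (1 / r)) :=
      lintegral_mono_set Set.Ioc_subset_Ioi_self
    have hconst : slm μ B S F lam * ENNReal.ofReal a
        ≤ ∫⁻ t in Set.Ioc (0 : ℝ) a, slm μ B S F (ENNReal.ofReal t ^ (1 / r)) := by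
      have := setLIntegral_mono' (f := fun _ => slm μ B S F lam)
        (g := fun t => slm μ B S F (ENNReal.ofReal t ^ (1 / r)))
        (μ := volume) measurableSet_Ioc hlower
      rwa [setLIntegral_const, Real.volume_Ioc, sub_zero] at this
    rw [hI] at hIoc
    have : slm μ B S F lam * ENNReal.ofReal a = 0 := le_antisymm (hconst.trans hIoc) (zero_le)
    rcases mul_eq_zero.1 this with h1 | h2
    · exact hc h1
    · exact (ENNReal.ofReal_pos.2 hapos).ne' h2
  intro lam hlam
  rcases eq_or_ne lam ⊤ with rfl | hne
  · have h1 : slm μ B S F 1 = 0 := key 1 one_pos ENNReal.one_ne_top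
    exact le_antisymm (le_trans (slm_anti F le_top) h1.le) (zero_le)
  · exact key lam hlam hne

theorem lintegral_Ioi_comp_mul_left {g : ℝ → ℝ≥0∞} (hg : Measurable g) {a : ℝ} (ha : 0 < a) :
    (∫⁻ t in Set.Ioi (0 : ℝ), g (a * t)) = ENNReal.ofReal a⁻¹ * ∫⁻ t in Set.Ioi (0 : ℝ), g t := by
  have hmap : Measure.map (fun t : ℝ => a * t) volume = ENNReal.ofReal |a⁻¹| • volume :=
    Real.map_volume_mul_left ha.ne'
  have hpre : (fun t : ℝ => a * t) ⁻¹' Set.Ioi (0 : ℝ) = Set.Ioi (0 : ℝ) := by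
    ext x; simp [Set.mem_Ioi, mul_pos_iff_of_pos_left, ha]
  calc (∫⁻ t in Set.Ioi (0 : ℝ), g (a * t))
      = ∫⁻ t in (fun t : ℝ => a * t) ⁻¹' Set.Ioi (0 : ℝ), g (a * t) := by rw [hpre]
    _ = ∫⁻ y in Set.Ioi (0 : ℝ), g y ∂(Measure.map (fun t : ℝ => a * t) volume) :=
        (setLIntegral_map measurableSet_Ioi hg (measurable_const_mul a)).symm
    _ = ENNReal.ofReal a⁻¹ * ∫⁻ t in Set.Ioi (0 : ℝ), g t := by
        rw [hmap, Measure.restrict_smul, lintegral_smul_measure, smul_eq_mul, abs_of_pos (inv_pos.2 ha)]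

theorem ennreal_rpow_finset_sum {Q : ℝ≥0∞} (hQ0 : Q ≠ 0) (hQt : Q ≠ ⊤) {ι : Type*}
    (t : Finset ι) (e : ι → ℝ) : Q ^ (∑ i ∈ t, e i) = ∏ i ∈ t, Q ^ e i := by
  classical
  induction t using Finset.induction_on with
  | empty => simp
  | @insert a s ha ih =>
      rw [Finset.sum_insert ha, Finset.prod_insert ha, ENNReal.rpow_add _ _ hQ0 hQt, ih]

end Helpers2
section Key

theorem key_estimate (M : ℕ) {CS : ℝ≥0∞} (hCS : 1 ≤ CS)
    {X₀ : Type u} {Xf : Fin M → Type u}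
    {μ₀ : OuterMeasure X₀} {B₀ : Set (Set X₀)} {S₀ : (X₀ → ℂ) → ℝ≥0∞}
    {μf : ∀ j, OuterMeasure (Xf j)} {Bf : ∀ j, Set (Set (Xf j))}
    {Sf : ∀ j, (Xf j → ℂ) → ℝ≥0∞}
    (h₀ : IsOuterSpace B₀ μ₀) (hS₀ : IsSizeWith CS B₀ S₀)
    (hf : ∀ j, IsOuterSpace (Bf j) (μf j)) (hSf : ∀ j, IsSizeWith CS (Bf j) (Sf j))
    (T : MultilinearMap ℂ (fun j => Xf j → ℂ) (X₀ → ℂ)) (C : ℝ≥0∞)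
    (hsize : ∀ F : (∀ j, Xf j → ℂ), S₀ (T F) ≤ C * ∏ j, Sf j (F j))
    (hsupp : ∀ F : (∀ j, Xf j → ℂ),
      slm μ₀ B₀ S₀ (T F) 0 ≤ ⨅ j, slm (μf j) (Bf j) (Sf j) (F j) 0)
    (F : ∀ j, Xf j → ℂ) (J : Finset (Fin M))
    (lam : Fin M → ℝ≥0∞) (hlam : ∀ j ∉ J, Sf j (F j) ≤ lam j) :
    slm μ₀ B₀ S₀ (T F) (CS ^ (2 ^ M) * (C * ∏ j, lam j)) ≤
      2 ^ M * ∑ j ∈ J, slm (μf j) (Bf j) (Sf j) (F j) (lam j) := by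
  classical
  by_cases htop : ∃ j ∈ J, slm (μf j) (Bf j) (Sf j) (F j) (lam j) = ⊤
  · obtain ⟨j, hjJ, hj⟩ := htop
    have hsum : (∑ j ∈ J, slm (μf j) (Bf j) (Sf j) (F j) (lam j)) = ⊤ :=
      ENNReal.sum_eq_top.2 ⟨j, hjJ, hj⟩
    rw [hsum, ENNReal.mul_top (by positivity)]
    exact le_top
  push_neg at htop
  refine ENNReal.le_of_forall_pos_le_add fun ε hε _ => ?_
  set δ : ℝ≥0∞ := (ε : ℝ≥0∞) / 2 ^ (M + 2) with hδdef
  have hδ0 : δ ≠ 0 := by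
    apply ENNReal.div_ne_zero.2
    exact ⟨by exact_mod_cast hε.ne', by simp⟩
  have hδtop : δ ≠ ⊤ := by
    refine (ENNReal.div_lt_top ENNReal.coe_ne_top (by positivity)).ne
  -- choose the sets E j realizing the superlevel measures
  have hEex : ∀ j, ∃ E : Set (Xf j), j ∈ J →
      E ∈ BUnionSets (Bf j) ∧ Sf j (Set.indicator Eᶜ (F j)) ≤ lam j ∧
        μf j E ≤ slm (μf j) (Bf j) (Sf j) (F j) (lam j) + δ := by
    intro j
    by_cases hj : j ∈ J
    · have hlt : slm (μf j) (Bf j) (Sf j) (F j) (lam j) <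
          slm (μf j) (Bf j) (Sf j) (F j) (lam j) + δ :=
        ENNReal.lt_add_right (htop j hj) hδ0
      obtain ⟨E, hE1, hE2, hE3⟩ := exists_of_slm_lt hlt
      exact ⟨E, fun _ => ⟨hE1, hE2, hE3.le⟩⟩
    · exact ⟨∅, fun h => absurd h hj⟩
  choose E hE using hEex
  set G : ∀ j, Xf j → ℂ := fun j => if j ∈ J then Set.indicator (E j) (F j) else 0 with hGdef
  set H : ∀ j, Xf j → ℂ :=
    fun j => if j ∈ J then Set.indicator (E j)ᶜ (F j) else F j with hHdef
  have hGH : G + H = F := by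
    funext j
    by_cases hj : j ∈ J
    · simp only [Pi.add_apply, hGdef, hHdef, if_pos hj]
      exact Set.indicator_self_add_compl (E j) (F j)
    · simp only [Pi.add_apply, hGdef, hHdef, if_neg hj, zero_add]
  have hexp : T F = ∑ s : Finset (Fin M), T (s.piecewise G H) := by
    rw [← hGH]; exact T.map_add_univ G H
  obtain ⟨U, hU, hUδ⟩ := h₀.exists_small (pos_iff_ne_zero.2 hδ0)
  -- choose the sets D s for the bad terms
  have hDex : ∀ s : Finset (Fin M), ∃ D : Set X₀, (s ∩ J).Nonempty →
      D ∈ BUnionSets B₀ ∧ S₀ (Set.indicator Dᶜ (T (s.piecewise G H))) ≤ 0 ∧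
        ∃ j ∈ J, μ₀ D ≤ slm (μf j) (Bf j) (Sf j) (F j) (lam j) + 2 * δ := by
    intro s
    by_cases hs : (s ∩ J).Nonempty
    · obtain ⟨j, hjsJ⟩ := hs
      obtain ⟨hjs, hjJ⟩ := Finset.mem_inter.1 hjsJ
      have hGj : s.piecewise G H j = Set.indicator (E j) (F j) := by
        rw [Finset.piecewise_eq_of_mem _ _ _ hjs]
        simp [hGdef, hjJ]
      have h1 : slm μ₀ B₀ S₀ (T (s.piecewise G H)) 0 ≤ μf j (E j) := by
        refine le_trans (hsupp _) (le_trans (iInf_le _ j) ?_)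
        rw [hGj]
        exact slm_indicator_le (hSf j) ((hE j hjJ).1) (F j)
      have h2 : μf j (E j) < slm (μf j) (Bf j) (Sf j) (F j) (lam j) + 2 * δ := by
        refine lt_of_le_of_lt ((hE j hjJ).2.2) ?_
        rw [two_mul, ← add_assoc]
        exact ENNReal.lt_add_right (by
          exact ENNReal.add_ne_top.2 ⟨htop j hjJ, hδtop⟩) hδ0
      obtain ⟨D, hD1, hD2, hD3⟩ := exists_of_slm_lt (lt_of_le_of_lt h1 h2)
      exact ⟨D, fun _ => ⟨hD1, hD2, j, hjJ, hD3.le⟩⟩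
    · exact ⟨∅, fun h => absurd h hs⟩
  choose D hD using hDex
  set bad : Finset (Finset (Fin M)) :=
    Finset.univ.filter (fun s => (s ∩ J).Nonempty) with hbaddef
  set DD : Set X₀ := U ∪ ⋃ s ∈ bad, D s with hDDdef
  have hDD : DD ∈ BUnionSets B₀ :=
    BUnionSets.union_biUnion_mem hU bad D
      (fun s hs => (hD s (Finset.mem_filter.1 hs).2).1)
  have hcard : (Finset.univ : Finset (Finset (Fin M))).card = 2 ^ M := by
    rw [Finset.card_univ, Fintype.card_finset, Fintype.card_fin]
  -- the size bound
  have hterm : ∀ s : Finset (Fin M), S₀ (Set.indicator DDᶜ (T (s.piecewise G H))) ≤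
      if s = ∅ then C * ∏ j, lam j else 0 := by
    intro s
    by_cases hsempty : s = ∅
    · rw [if_pos hsempty, hsempty, Finset.piecewise_empty]
      refine le_trans (hS₀.mono _ DD hDD) (le_trans (hsize H) ?_)
      refine mul_le_mul_right (Finset.prod_le_prod' fun j _ => ?_) C
      by_cases hj : j ∈ J
      · rw [hHdef]; simp only [if_pos hj]; exact (hE j hj).2.1
      · rw [hHdef]; simp only [if_neg hj]; exact hlam j hj
    · rw [if_neg hsempty]
      by_cases hs : (s ∩ J).Nonempty
      · have hsbad : s ∈ bad := Finset.mem_filter.2 ⟨Finset.mem_univ s, hs⟩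
        have hsub : D s ⊆ DD := by
          rw [hDDdef]
          exact Set.subset_union_of_subset_right
            (Set.subset_biUnion_of_mem (u := fun s => D s) hsbad) U
        exact le_trans (hS₀.size_indicator_compl_le hsub hDD _) ((hD s hs).2.1)
      · obtain ⟨j, hjs⟩ := Finset.nonempty_of_ne_empty hsempty
        have hjJ : j ∉ J := by
          intro hjJ
          exact hs ⟨j, Finset.mem_inter.2 ⟨hjs, hjJ⟩⟩
        have hzero : T (s.piecewise G H) = 0 := by
          refine T.map_coord_zero j ?_
          rw [Finset.piecewise_eq_of_mem _ _ _ hjs]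
          simp [hGdef, hjJ]
        rw [hzero, Set.indicator_zero', hS₀.size_zero]
  have hsize1 : S₀ (Set.indicator DDᶜ (T F)) ≤ CS ^ (2 ^ M) * (C * ∏ j, lam j) := by
    rw [hexp, indicator_sum_eq]
    calc S₀ (∑ s : Finset (Fin M), Set.indicator DDᶜ (T (s.piecewise G H)))
        ≤ CS ^ (Finset.univ : Finset (Finset (Fin M))).card *
            ∑ s : Finset (Fin M), S₀ (Set.indicator DDᶜ (T (s.piecewise G H))) :=
          hS₀.size_sum_le hCS Finset.univ _
      _ ≤ CS ^ (2 ^ M) * (C * ∏ j, lam j) := by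
          rw [hcard]
          refine mul_le_mul_right ?_ _
          calc (∑ s : Finset (Fin M), S₀ (Set.indicator DDᶜ (T (s.piecewise G H))))
              ≤ ∑ s : Finset (Fin M), if s = ∅ then C * ∏ j, lam j else 0 :=
              Finset.sum_le_sum fun s _ => hterm s
            _ = C * ∏ j, lam j := by
              rw [Finset.sum_ite_eq' Finset.univ (∅ : Finset (Fin M))
                (fun _ => C * ∏ j, lam j)]
              simp
  -- the measure bound
  have hmeas : μ₀ DD ≤
      2 ^ M * (∑ j ∈ J, slm (μf j) (Bf j) (Sf j) (F j) (lam j)) + ε := by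
    have h1 : μ₀ DD ≤ δ + ∑ s ∈ bad, μ₀ (D s) := by
      refine le_trans (measure_union_le U _) ?_
      exact add_le_add hUδ (measure_biUnion_finset_le bad D)
    have h2 : ∀ s ∈ bad, μ₀ (D s) ≤
        (∑ j ∈ J, slm (μf j) (Bf j) (Sf j) (F j) (lam j)) + 2 * δ := by
      intro s hs
      obtain ⟨j, hjJ, hj⟩ := (hD s (Finset.mem_filter.1 hs).2).2.2
      refine le_trans hj (add_le_add_left ?_ _)
      exact Finset.single_le_sum
        (f := fun i => slm (μf i) (Bf i) (Sf i) (F i) (lam i)) (fun i _ => zero_le) hjJ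
    have h3 : (∑ s ∈ bad, μ₀ (D s)) ≤
        2 ^ M * ((∑ j ∈ J, slm (μf j) (Bf j) (Sf j) (F j) (lam j)) + 2 * δ) := by
      refine le_trans (Finset.sum_le_sum h2) ?_
      rw [Finset.sum_const, nsmul_eq_mul]
      refine mul_le_mul_left ?_ _
      have : bad.card ≤ 2 ^ M := hcard ▸ Finset.card_filter_le _ _
      exact_mod_cast Nat.cast_le.2 this
    calc μ₀ DD ≤ δ + ∑ s ∈ bad, μ₀ (D s) := h1
      _ ≤ δ + 2 ^ M * ((∑ j ∈ J, slm (μf j) (Bf j) (Sf j) (F j) (lam j)) + 2 * δ) :=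
          add_le_add_right h3 δ
      _ = 2 ^ M * (∑ j ∈ J, slm (μf j) (Bf j) (Sf j) (F j) (lam j)) +
          (δ + 2 ^ (M + 1) * δ) := by ring
      _ ≤ 2 ^ M * (∑ j ∈ J, slm (μf j) (Bf j) (Sf j) (F j) (lam j)) + ε := by
          refine add_le_add_right ?_ _
          have hle : δ + 2 ^ (M + 1) * δ ≤ 2 ^ (M + 2) * δ := by
            have : (1 : ℝ≥0∞) + 2 ^ (M + 1) ≤ 2 ^ (M + 2) := by
              rw [pow_succ]
              have h1 : (1 : ℝ≥0∞) ≤ 2 ^ (M + 1) := one_le_pow_of_one_le' (by norm_num) _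
              calc (1 : ℝ≥0∞) + 2 ^ (M + 1) ≤ 2 ^ (M + 1) + 2 ^ (M + 1) :=
                add_le_add_left h1 _
                _ = 2 ^ (M + 1) * 2 := by ring
            calc δ + 2 ^ (M + 1) * δ = (1 + 2 ^ (M + 1)) * δ := by ring
              _ ≤ 2 ^ (M + 2) * δ := mul_le_mul_left this δ
          refine le_trans hle ?_
          rw [hδdef, ENNReal.mul_div_cancel (by positivity) (by simp)]
  exact le_trans (slm_le hDD hsize1) hmeas

end Key
/-- Auxiliary: indicator distributes over addition of functions. -/
theorem indicator_add_eq {X : Type u} (s : Set X) (f g : X → ℂ) :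
    Set.indicator s (f + g) = Set.indicator s f + Set.indicator s g := by
  funext x
  by_cases hx : x ∈ s
  · simp [Set.indicator_of_mem hx]
  · simp [Set.indicator_of_notMem hx]

/-- outer Hölder inequality for an `M`-linear map between outer
Lebesgue spaces. -/
theorem outer_holder (M : ℕ) (p : Fin M → ℝ≥0∞) (hp : ∀ j, 0 < p j)
    (CS : ℝ≥0∞) (hCS : 1 ≤ CS) (hCStop : CS ≠ ⊤) :
    ∃ K : ℝ≥0∞, 0 < K ∧ K ≠ ⊤ ∧
      ∀ (X₀ : Type u) (Xf : Fin M → Type u)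
        (μ₀ : OuterMeasure X₀) (B₀ : Set (Set X₀)) (S₀ : (X₀ → ℂ) → ℝ≥0∞)
        (μf : ∀ j, OuterMeasure (Xf j)) (Bf : ∀ j, Set (Set (Xf j)))
        (Sf : ∀ j, (Xf j → ℂ) → ℝ≥0∞),
        IsOuterSpace B₀ μ₀ → IsSizeWith CS B₀ S₀ →
        (∀ j, IsOuterSpace (Bf j) (μf j)) → (∀ j, IsSizeWith CS (Bf j) (Sf j)) →
        ∀ (T : MultilinearMap ℂ (fun j => Xf j → ℂ) (X₀ → ℂ)) (C : ℝ≥0∞),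
          (∀ F : (∀ j, Xf j → ℂ), S₀ (T F) ≤ C * ∏ j, Sf j (F j)) →
          (∀ F : (∀ j, Xf j → ℂ),
            slm μ₀ B₀ S₀ (T F) 0 ≤ ⨅ j, slm (μf j) (Bf j) (Sf j) (F j) 0) →
          ∀ F : (∀ j, Xf j → ℂ),
            oLpE μ₀ B₀ S₀ (∑ j, (p j)⁻¹)⁻¹ (T F) ≤
              K * C * ∏ j, oLpE (μf j) (Bf j) (Sf j) (p j) (F j) := by
  classical
  set p₀ : ℝ≥0∞ := (∑ j, (p j)⁻¹)⁻¹ with hp₀def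
  set r₀ : ℝ := p₀.toReal with hr₀def
  set K : ℝ≥0∞ := max 1 (((2 : ℝ≥0∞) ^ M * M) ^ (1 / r₀) * CS ^ (2 ^ M)) with hKdef
  have hK1 : 1 ≤ K := le_max_left _ _
  have hK0 : 0 < K := lt_of_lt_of_le zero_lt_one hK1
  have hKtop : K ≠ ⊤ := by
    have h1 : ((2 : ℝ≥0∞) ^ M * M) ^ (1 / r₀) ≠ ⊤ :=
      ENNReal.rpow_ne_top_of_nonneg (by positivity)
        (ENNReal.mul_ne_top (by simp) (ENNReal.natCast_ne_top M))
    have h2 : CS ^ (2 ^ M) ≠ ⊤ := ENNReal.pow_ne_top hCStop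
    rw [hKdef]
    exact (max_lt ENNReal.one_lt_top (ENNReal.mul_lt_top h1.lt_top h2.lt_top)).ne
  refine ⟨K, hK0, hKtop, ?_⟩
  intro X₀ Xf μ₀ B₀ S₀ μf Bf Sf h₀ hS₀ hf hSf T C hsize hsupp F
  by_cases hall : ∀ j, p j = ⊤
  · -- all exponents infinite
    have hp₀ : p₀ = ⊤ := by
      rw [hp₀def, Finset.sum_eq_zero fun j _ => by rw [hall j, ENNReal.inv_top]]
      exact ENNReal.inv_zero
    have hL : oLpE μ₀ B₀ S₀ p₀ (T F) = S₀ (T F) := by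
      simp only [oLpE, if_pos hp₀]
    have hR : (∏ j, oLpE (μf j) (Bf j) (Sf j) (p j) (F j)) = ∏ j, Sf j (F j) :=
      Finset.prod_congr rfl fun j _ => by simp only [oLpE, if_pos (hall j)]
    rw [hL, hR, mul_assoc]
    exact le_trans (hsize F) (le_mul_of_one_le_left (zero_le) hK1)
  -- some exponent finite
  push_neg at hall
  obtain ⟨j₀', hj₀'⟩ := hall
  set J : Finset (Fin M) := Finset.univ.filter (fun j => p j ≠ ⊤) with hJdef
  have hmemJ : ∀ j, j ∈ J ↔ p j ≠ ⊤ := fun j => by simp [hJdef]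
  have hinvtop : ∀ j, (p j)⁻¹ ≠ ⊤ := fun j => ENNReal.inv_ne_top.2 (hp j).ne'
  have hsumtop : (∑ j, (p j)⁻¹) ≠ ⊤ :=
    (ENNReal.sum_lt_top.2 fun j _ => (hinvtop j).lt_top).ne
  have hsumne0 : (∑ j, (p j)⁻¹) ≠ 0 := by
    intro h
    have := (Finset.sum_eq_zero_iff.1 h) j₀' (Finset.mem_univ j₀')
    exact hj₀' (by simpa using this)
  have hp₀top : p₀ ≠ ⊤ := by rw [hp₀def]; exact ENNReal.inv_ne_top.2 hsumne0
  have hp₀0 : p₀ ≠ 0 := by rw [hp₀def]; exact ENNReal.inv_ne_zero.2 hsumtop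
  have hr₀pos : 0 < r₀ := ENNReal.toReal_pos hp₀0 hp₀top
  have hLHS : oLpE μ₀ B₀ S₀ p₀ (T F) = oLp μ₀ B₀ S₀ r₀ (T F) := by
    simp only [oLpE, if_neg hp₀top, hr₀def]
  have hzeroLHS : (∀ lam : ℝ≥0∞, slm μ₀ B₀ S₀ (T F) lam = 0) →
      oLp μ₀ B₀ S₀ r₀ (T F) = 0 := by
    intro h
    rw [oLp]
    have hint : (∫⁻ t in Set.Ioi (0 : ℝ),
        slm μ₀ B₀ S₀ (T F) (ENNReal.ofReal t ^ (1 / r₀))) = 0 := by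
      simp only [h, lintegral_zero]
    rw [hint]
    exact ENNReal.zero_rpow_of_pos (by positivity)
  by_cases hzero : ∃ j, oLpE (μf j) (Bf j) (Sf j) (p j) (F j) = 0
  · -- one of the norms vanishes : the left-hand side is zero
    obtain ⟨j₀, hj₀⟩ := hzero
    have hclaim : ∀ ε : ℝ≥0∞, 0 < ε → ∃ Ee ∈ BUnionSets (Bf j₀),
        μf j₀ Ee ≤ ε ∧ Sf j₀ (Set.indicator Eeᶜ (F j₀)) = 0 := by
      intro ε hε
      by_cases hptop : p j₀ = ⊤
      · have hSF : Sf j₀ (F j₀) = 0 := by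
          rw [oLpE, if_pos hptop] at hj₀; exact hj₀
        obtain ⟨U, hU, hUε⟩ := (hf j₀).exists_small hε
        refine ⟨U, hU, hUε, le_antisymm ?_ (zero_le)⟩
        exact le_trans ((hSf j₀).mono (F j₀) U hU) hSF.le
      · have hrpos : 0 < (p j₀).toReal := ENNReal.toReal_pos (hp j₀).ne' hptop
        have hoLp : oLp (μf j₀) (Bf j₀) (Sf j₀) (p j₀).toReal (F j₀) = 0 := by
          rw [oLpE, if_neg hptop] at hj₀; exact hj₀
        have hslm : ∀ lam : ℝ≥0∞, 0 < lam →
            slm (μf j₀) (Bf j₀) (Sf j₀) (F j₀) lam = 0 :=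
          slm_zero_of_oLp_zero hrpos hoLp
        have hEk : ∀ k : ℕ, ∃ Ek ∈ BUnionSets (Bf j₀),
            Sf j₀ (Set.indicator Ekᶜ (F j₀)) ≤ 2⁻¹ ^ k ∧
              μf j₀ Ek < ε * 2⁻¹ ^ (k + 1) := by
          intro k
          have hhalf : ((2 : ℝ≥0∞)⁻¹) ≠ 0 := by norm_num
          have h1 : slm (μf j₀) (Bf j₀) (Sf j₀) (F j₀) (2⁻¹ ^ k) = 0 :=
            hslm _ (pos_iff_ne_zero.2 (pow_ne_zero k hhalf))
          have h2 : slm (μf j₀) (Bf j₀) (Sf j₀) (F j₀) (2⁻¹ ^ k) < ε * 2⁻¹ ^ (k + 1) := by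
            rw [h1]
            exact ENNReal.mul_pos hε.ne' (pow_ne_zero (k + 1) hhalf)
          obtain ⟨Ek, hEk1, hEk2, hEk3⟩ := exists_of_slm_lt h2
          exact ⟨Ek, hEk1, hEk2, hEk3⟩
        choose Ek hEk1 hEk2 hEk3 using hEk
        refine ⟨⋃ k, Ek k, BUnionSets.iUnion_mem hEk1, ?_, ?_⟩
        · refine le_trans (measure_iUnion_le Ek) ?_
          calc ∑' k, μf j₀ (Ek k) ≤ ∑' k, ε * 2⁻¹ ^ (k + 1) :=
                ENNReal.tsum_le_tsum fun k => (hEk3 k).le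
            _ = ε * ∑' k, 2⁻¹ ^ (k + 1) := ENNReal.tsum_mul_left
            _ = ε := by
                rw [ENNReal.tsum_geometric_add_one, ENNReal.one_sub_inv_two,
                  ENNReal.mul_inv_cancel (by norm_num) (by norm_num), mul_one]
        · refine le_antisymm ?_ (zero_le)
          by_contra hne
          push_neg at hne
          obtain ⟨n, hn⟩ := ENNReal.exists_inv_two_pow_lt hne.ne'
          have hle : Sf j₀ (Set.indicator (⋃ k, Ek k)ᶜ (F j₀)) ≤ 2⁻¹ ^ n :=
            le_trans ((hSf j₀).size_indicator_compl_le
              (Set.subset_iUnion Ek n) (BUnionSets.iUnion_mem hEk1) (F j₀)) (hEk2 n)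
          exact absurd hle (not_le.2 hn)
    -- now show the superlevel measure of T F vanishes at every level
    have hslm0 : ∀ lam : ℝ≥0∞, slm μ₀ B₀ S₀ (T F) lam = 0 := by
      intro lam
      refine le_antisymm (ENNReal.le_of_forall_pos_le_add fun ε hε _ => ?_) (zero_le)
      rw [zero_add]
      set δ : ℝ≥0∞ := (ε : ℝ≥0∞) / 4 with hδdef
      have hδ0 : δ ≠ 0 := by
        apply ENNReal.div_ne_zero.2
        exact ⟨by exact_mod_cast hε.ne', by norm_num⟩
      have hδtop : δ ≠ ⊤ := (ENNReal.div_lt_top ENNReal.coe_ne_top (by norm_num)).ne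
      obtain ⟨Ee, hEe, hEeμ, hEeS⟩ := hclaim δ (pos_iff_ne_zero.2 hδ0)
      set Fg := Function.update F j₀ (Set.indicator Ee (F j₀)) with hFgdef
      set Fb := Function.update F j₀ (Set.indicator Eeᶜ (F j₀)) with hFbdef
      have hTsplit : T F = T Fg + T Fb := by
        calc T F = T (Function.update F j₀
            (Set.indicator Ee (F j₀) + Set.indicator Eeᶜ (F j₀))) := by
              rw [Set.indicator_self_add_compl, Function.update_eq_self]
          _ = T Fg + T Fb := T.map_update_add F j₀ _ _
      have hSb : S₀ (T Fb) = 0 := by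
        refine le_antisymm (le_trans (hsize Fb) ?_) (zero_le)
        have hpr : (∏ j, Sf j (Fb j)) = 0 := by
          refine Finset.prod_eq_zero (Finset.mem_univ j₀) ?_
          rw [hFbdef, Function.update_self]
          exact hEeS
        rw [hpr, mul_zero]
      have hsuppg : slm μ₀ B₀ S₀ (T Fg) 0 ≤ δ := by
        refine le_trans (hsupp Fg) (le_trans (iInf_le _ j₀) ?_)
        rw [hFgdef, Function.update_self]
        exact le_trans (slm_indicator_le (hSf j₀) hEe (F j₀)) hEeμ
      have hlt : slm μ₀ B₀ S₀ (T Fg) 0 < δ + δ :=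
        lt_of_le_of_lt hsuppg (ENNReal.lt_add_right hδtop hδ0)
      obtain ⟨D₁, hD₁, hD₁S, hD₁μ⟩ := exists_of_slm_lt hlt
      obtain ⟨U, hU, hUμ⟩ := h₀.exists_small (pos_iff_ne_zero.2 hδ0)
      set DD := D₁ ∪ U with hDDdef
      have hDD : DD ∈ BUnionSets B₀ := BUnionSets.union_mem hD₁ hU
      have hSDD : S₀ (Set.indicator DDᶜ (T F)) ≤ lam := by
        rw [hTsplit, indicator_add_eq]
        have h1 : S₀ (Set.indicator DDᶜ (T Fg)) ≤ 0 :=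
          le_trans (hS₀.size_indicator_compl_le Set.subset_union_left hDD (T Fg)) hD₁S
        have h2 : S₀ (Set.indicator DDᶜ (T Fb)) ≤ 0 := by
          refine le_trans (hS₀.size_indicator_compl_le Set.subset_union_right hDD (T Fb)) ?_
          exact le_trans ((hS₀).mono (T Fb) U hU) hSb.le
        refine le_trans (hS₀.tri _ _) ?_
        calc CS * (S₀ (Set.indicator DDᶜ (T Fg)) + S₀ (Set.indicator DDᶜ (T Fb)))
            ≤ CS * (0 + 0) := mul_le_mul_right (add_le_add h1 h2) CS
          _ = 0 := by simp
          _ ≤ lam := zero_le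
      calc slm μ₀ B₀ S₀ (T F) lam ≤ μ₀ DD := slm_le hDD hSDD
        _ ≤ μ₀ D₁ + μ₀ U := measure_union_le D₁ U
        _ ≤ (δ + δ) + δ := add_le_add hD₁μ.le hUμ
        _ ≤ (δ + δ) + (δ + δ) := add_le_add_right le_self_add _
        _ = 4 * δ := by ring
        _ = ε := by
            rw [hδdef, ENNReal.mul_div_cancel (by norm_num) (by norm_num)]
    rw [hLHS, hzeroLHS hslm0]
    exact zero_le
  push_neg at hzero
  by_cases hC0 : C = 0
  · have hTzero : S₀ (T F) = 0 := by
      refine le_antisymm (le_trans (hsize F) ?_) (zero_le)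
      rw [hC0, zero_mul]
    have hslm0 : ∀ lam : ℝ≥0∞, slm μ₀ B₀ S₀ (T F) lam = 0 :=
      slm_eq_zero_of_size_zero h₀ hS₀ hTzero
    rw [hLHS, hzeroLHS hslm0]
    exact zero_le
  have hprod0 : (∏ j, oLpE (μf j) (Bf j) (Sf j) (p j) (F j)) ≠ 0 :=
    Finset.prod_ne_zero_iff.2 fun j _ => hzero j
  by_cases hCtop : C = ⊤
  · rw [hCtop, ENNReal.mul_top hK0.ne', ENNReal.top_mul hprod0]
    exact le_top
  by_cases hptop : ∃ j, oLpE (μf j) (Bf j) (Sf j) (p j) (F j) = ⊤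
  · obtain ⟨j₁, hj₁⟩ := hptop
    have hprtop : (∏ j, oLpE (μf j) (Bf j) (Sf j) (p j) (F j)) = ⊤ := by
      rw [← Finset.prod_erase_mul Finset.univ _ (Finset.mem_univ j₁), hj₁]
      rw [ENNReal.mul_top]
      exact Finset.prod_ne_zero_iff.2 fun j _ => hzero j
    rw [hprtop, ENNReal.mul_top]
    · exact le_top
    · exact mul_ne_zero hK0.ne' hC0
  -- MAIN CASE
  push_neg at hptop
  set ν : Fin M → ℝ≥0∞ := fun j => oLpE (μf j) (Bf j) (Sf j) (p j) (F j) with hνdef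
  have hν0 : ∀ j, ν j ≠ 0 := hzero
  have hνtop : ∀ j, ν j ≠ ⊤ := hptop
  set r : Fin M → ℝ := fun j => (p j).toReal with hrdef
  have hrpos : ∀ j ∈ J, 0 < r j := fun j hj =>
    ENNReal.toReal_pos (hp j).ne' ((hmemJ j).1 hj)
  set A : ℝ≥0∞ := CS ^ (2 ^ M) with hAdef
  have hA0 : A ≠ 0 := by
    rw [hAdef]
    exact (lt_of_lt_of_le zero_lt_one (one_le_pow_of_one_le' hCS _)).ne'
  have hAtop : A ≠ ⊤ := ENNReal.pow_ne_top hCStop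
  set Bc : ℝ≥0∞ := A * (C * ∏ j, ν j) with hBcdef
  have hBc0 : Bc ≠ 0 := by
    rw [hBcdef]
    exact mul_ne_zero hA0 (mul_ne_zero hC0 hprod0)
  have hBctop : Bc ≠ ⊤ := by
    rw [hBcdef]
    refine ENNReal.mul_ne_top hAtop (ENNReal.mul_ne_top hCtop ?_)
    exact (ENNReal.prod_lt_top fun j _ => (hνtop j).lt_top).ne
  set b : ℝ := (Bc ^ r₀).toReal with hbdef
  have hBcrtop : Bc ^ r₀ ≠ ⊤ := ENNReal.rpow_ne_top_of_nonneg hr₀pos.le hBctop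
  have hBcr0 : Bc ^ r₀ ≠ 0 := by
    simp only [ne_eq, ENNReal.rpow_eq_zero_iff, not_or]
    exact ⟨fun h => hBc0 h.1, fun h => hBctop h.1⟩
  have hbpos : 0 < b := ENNReal.toReal_pos hBcr0 hBcrtop
  have hofb : ENNReal.ofReal b = Bc ^ r₀ := ENNReal.ofReal_toReal hBcrtop
  have hofb0 : ENNReal.ofReal b ≠ 0 := by rw [hofb]; exact hBcr0
  have hofbtop : ENNReal.ofReal b ≠ ⊤ := ENNReal.ofReal_ne_top
  -- the exponent sum identity
  have hsum : (∑ j ∈ J, 1 / r j) = 1 / r₀ := by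
    have h1 : 1 / r₀ = (p₀⁻¹).toReal := by
      rw [ENNReal.toReal_inv, hr₀def, one_div]
    have h2 : (p₀⁻¹ : ℝ≥0∞) = ∑ j, (p j)⁻¹ := by rw [hp₀def, inv_inv]
    have h3 : ((∑ j, (p j)⁻¹ : ℝ≥0∞)).toReal = ∑ j, ((p j)⁻¹).toReal :=
      ENNReal.toReal_sum fun j _ => hinvtop j
    rw [h1, h2, h3]
    rw [← Finset.sum_subset (Finset.subset_univ J) ?van]
    · refine (Finset.sum_congr rfl fun j hj => ?_).symm
      rw [ENNReal.toReal_inv, hrdef, one_div]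
    · intro j _ hj
      have : p j = ⊤ := by
        by_contra hne
        exact hj ((hmemJ j).2 hne)
      rw [this, ENNReal.inv_top, ENNReal.toReal_zero]
  -- the scaling factors
  set a : Fin M → ℝ := fun j => ((ν j) ^ (r j)).toReal / b with hadef
  have hνrtop : ∀ j, (ν j) ^ (r j) ≠ ⊤ := fun j =>
    ENNReal.rpow_ne_top_of_nonneg ENNReal.toReal_nonneg (hνtop j)
  have hνr0 : ∀ j, (ν j) ^ (r j) ≠ 0 := by
    intro j
    simp only [ne_eq, ENNReal.rpow_eq_zero_iff, not_or]
    exact ⟨fun h => hν0 j h.1, fun h => hνtop j h.1⟩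
  have hapos : ∀ j, 0 < a j := by
    intro j
    simp only [hadef]
    exact div_pos (ENNReal.toReal_pos (hνr0 j) (hνrtop j)) hbpos
  -- the pointwise key estimate
  have hkey : ∀ t : ℝ, 0 < t →
      slm μ₀ B₀ S₀ (T F) (ENNReal.ofReal t ^ (1 / r₀)) ≤
        2 ^ M * ∑ j ∈ J, slm (μf j) (Bf j) (Sf j) (F j)
          (ENNReal.ofReal (a j * t) ^ (1 / r j)) := by
    intro t ht
    set Q : ℝ≥0∞ := ENNReal.ofReal t / ENNReal.ofReal b with hQdef
    have hQ0 : Q ≠ 0 := by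
      rw [hQdef]
      simp only [ne_eq, ENNReal.div_eq_zero_iff, not_or]
      exact ⟨by simp [ht], hofbtop⟩
    have hQtop : Q ≠ ⊤ := by
      rw [hQdef]
      exact (ENNReal.div_lt_top ENNReal.ofReal_ne_top hofb0).ne
    set lam : Fin M → ℝ≥0∞ :=
      fun j => if j ∈ J then ENNReal.ofReal (a j * t) ^ (1 / r j) else Sf j (F j)
      with hlamdef
    have hlamJ : ∀ j ∈ J, lam j = ν j * Q ^ (1 / r j) := by
      intro j hj
      have hOa : ENNReal.ofReal (a j) = ν j ^ (r j) / ENNReal.ofReal b := by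
        simp only [hadef]
        rw [ENNReal.ofReal_div_of_pos hbpos, ENNReal.ofReal_toReal (hνrtop j)]
      have h1 : ENNReal.ofReal (a j * t) = ν j ^ (r j) * Q := by
        rw [ENNReal.ofReal_mul (hapos j).le, hOa, hQdef, div_eq_mul_inv, div_eq_mul_inv]
        ring
      simp only [hlamdef, if_pos hj]
      rw [h1, ENNReal.mul_rpow_of_nonneg _ _ (by positivity), one_div,
        ENNReal.rpow_rpow_inv (hrpos j hj).ne']
    have hprodJ : (∏ j ∈ J, lam j) = (∏ j ∈ J, ν j) * Q ^ (1 / r₀) := by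
      calc (∏ j ∈ J, lam j) = ∏ j ∈ J, (ν j * Q ^ (1 / r j)) :=
            Finset.prod_congr rfl hlamJ
        _ = (∏ j ∈ J, ν j) * ∏ j ∈ J, Q ^ (1 / r j) := Finset.prod_mul_distrib
        _ = (∏ j ∈ J, ν j) * Q ^ (1 / r₀) := by
            rw [← ennreal_rpow_finset_sum hQ0 hQtop, hsum]
    have hprodall : (∏ j, lam j) = (∏ j, ν j) * Q ^ (1 / r₀) := by
      have hsplit : (∏ j, lam j) = (∏ j ∈ J, lam j) * ∏ j ∈ Finset.univ.filter
          (fun j => ¬ p j ≠ ⊤), lam j := by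
        rw [hJdef, Finset.prod_filter_mul_prod_filter_not]
      have hsplitν : (∏ j, ν j) = (∏ j ∈ J, ν j) * ∏ j ∈ Finset.univ.filter
          (fun j => ¬ p j ≠ ⊤), ν j := by
        rw [hJdef, Finset.prod_filter_mul_prod_filter_not]
      have hlamnotJ : ∀ j ∈ Finset.univ.filter (fun j => ¬ p j ≠ ⊤), lam j = ν j := by
        intro j hj
        have hjtop : p j = ⊤ := by simpa using (Finset.mem_filter.1 hj).2
        have hjJ : j ∉ J := by
          rw [hmemJ]
          simpa using hjtop
        simp only [hlamdef, if_neg hjJ, hνdef, oLpE, if_pos hjtop]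
      rw [hsplit, Finset.prod_congr rfl hlamnotJ, hprodJ, hsplitν]
      ring
    have hlevel : A * (C * ∏ j, lam j) = ENNReal.ofReal t ^ (1 / r₀) := by
      rw [hprodall]
      have hQr : Q ^ (1 / r₀) = ENNReal.ofReal t ^ (1 / r₀) / Bc := by
        rw [hQdef, ENNReal.div_rpow_of_nonneg _ _ (by positivity), hofb, one_div,
          ENNReal.rpow_rpow_inv hr₀pos.ne']
      rw [hQr, ← mul_assoc, ← mul_assoc]
      rw [show A * C * (∏ j, ν j) = Bc by rw [hBcdef]; ring]
      exact ENNReal.mul_div_cancel hBc0 hBctop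
    have hlamcond : ∀ j ∉ J, Sf j (F j) ≤ lam j := by
      intro j hj
      simp only [hlamdef, if_neg hj]
      exact le_rfl
    have := key_estimate M hCS h₀ hS₀ hf hSf T C hsize hsupp F J lam hlamcond
    rw [hAdef] at hlevel
    rw [hlevel] at this
    refine le_trans this ?_
    refine mul_le_mul_right (Finset.sum_le_sum fun j hj => ?_) _
    simp only [hlamdef, if_pos hj]
    exact le_rfl
  -- integrate the key estimate
  set g : Fin M → ℝ → ℝ≥0∞ := fun j t =>
    slm (μf j) (Bf j) (Sf j) (F j) (ENNReal.ofReal t ^ (1 / r j)) with hgdef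
  have hganti : ∀ j ∈ J, Antitone (g j) := fun j hj =>
    slm_integrand_antitone (F j) (hrpos j hj)
  have hgmeas : ∀ j ∈ J, Measurable (g j) := fun j hj => (hganti j hj).measurable
  have hIint : ∀ j ∈ J, (∫⁻ t in Set.Ioi (0 : ℝ), g j t) = ν j ^ (r j) := by
    intro j hj
    have hνeq : ν j = (∫⁻ t in Set.Ioi (0 : ℝ), g j t) ^ (1 / r j) := by
      simp only [hνdef, oLpE, if_neg ((hmemJ j).1 hj)]
      rfl
    rw [hνeq, one_div, ENNReal.rpow_inv_rpow (hrpos j hj).ne']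
  have hIcomp : ∀ j ∈ J, (∫⁻ t in Set.Ioi (0 : ℝ), g j (a j * t)) = ENNReal.ofReal b := by
    intro j hj
    rw [lintegral_Ioi_comp_mul_left (hgmeas j hj) (hapos j), hIint j hj]
    have hinv : (a j)⁻¹ = b / ((ν j) ^ (r j)).toReal := by
      simp only [hadef]
      exact inv_div _ _
    rw [hinv, ENNReal.ofReal_div_of_pos (ENNReal.toReal_pos (hνr0 j) (hνrtop j)),
      ENNReal.ofReal_toReal (hνrtop j)]
    exact ENNReal.div_mul_cancel (hνr0 j) (hνrtop j)
  have hI₀ : (∫⁻ t in Set.Ioi (0 : ℝ),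
      slm μ₀ B₀ S₀ (T F) (ENNReal.ofReal t ^ (1 / r₀))) ≤
      2 ^ M * ((M : ℝ≥0∞) * ENNReal.ofReal b) := by
    have hmeasRHS : Measurable (fun t : ℝ =>
        2 ^ M * ∑ j ∈ J, g j (a j * t)) := by
      refine Measurable.const_mul ?_ _
      refine Finset.measurable_sum J fun j hj => ?_
      exact (hgmeas j hj).comp (measurable_const_mul (a j))
    calc (∫⁻ t in Set.Ioi (0 : ℝ), slm μ₀ B₀ S₀ (T F) (ENNReal.ofReal t ^ (1 / r₀)))
        ≤ ∫⁻ t in Set.Ioi (0 : ℝ), 2 ^ M * ∑ j ∈ J, g j (a j * t) := by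
          refine setLIntegral_mono hmeasRHS fun t ht => ?_
          exact hkey t ht
      _ = 2 ^ M * ∑ j ∈ J, ∫⁻ t in Set.Ioi (0 : ℝ), g j (a j * t) := by
          rw [lintegral_const_mul'' _ ?hm]
          · congr 1
            refine lintegral_finset_sum' J fun j hj => ?_
            exact ((hgmeas j hj).comp (measurable_const_mul (a j))).aemeasurable
          · refine (Finset.measurable_sum J fun j hj => ?_).aemeasurable
            exact (hgmeas j hj).comp (measurable_const_mul (a j))
      _ = 2 ^ M * ∑ j ∈ J, ENNReal.ofReal b := by
          congr 1
          exact Finset.sum_congr rfl hIcomp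
      _ = 2 ^ M * (J.card * ENNReal.ofReal b) := by
          rw [Finset.sum_const, nsmul_eq_mul]
      _ ≤ 2 ^ M * ((M : ℝ≥0∞) * ENNReal.ofReal b) := by
          refine mul_le_mul_right (mul_le_mul_left ?_ _) _
          have : J.card ≤ M := le_trans (Finset.card_filter_le _ _) (by simp)
          exact_mod_cast Nat.cast_le.2 this
  -- conclude
  rw [hLHS, oLp]
  calc (∫⁻ t in Set.Ioi (0 : ℝ),
      slm μ₀ B₀ S₀ (T F) (ENNReal.ofReal t ^ (1 / r₀))) ^ (1 / r₀)
      ≤ (2 ^ M * ((M : ℝ≥0∞) * ENNReal.ofReal b)) ^ (1 / r₀) :=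
        ENNReal.rpow_le_rpow hI₀ (by positivity)
    _ = ((2 : ℝ≥0∞) ^ M * M) ^ (1 / r₀) * (ENNReal.ofReal b) ^ (1 / r₀) := by
        rw [← mul_assoc, ENNReal.mul_rpow_of_nonneg _ _ (by positivity)]
    _ = ((2 : ℝ≥0∞) ^ M * M) ^ (1 / r₀) * Bc := by
        rw [hofb, one_div, ENNReal.rpow_rpow_inv hr₀pos.ne']
    _ = (((2 : ℝ≥0∞) ^ M * M) ^ (1 / r₀) * A) * (C * ∏ j, ν j) := by
        rw [hBcdef]; ring
    _ ≤ K * (C * ∏ j, ν j) := by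
        refine mul_le_mul_left ?_ _
        rw [hKdef]
        exact le_max_right _ _
    _ = K * C * ∏ j, ν j := by rw [mul_assoc]
end

section
/- Tree–strip measure comparison: for every β ∈ (0,1], every countable union of β-strips V and every countable union of trees W, μ¹_Θ(W ∩ V) ≤ 4β^{-1} ν_β(V) μ^∞_Θ(W ∩ V). -/
open MeasureTheory
open scoped ENNReal

/-- The tree `T_Θ(ξ, x, s) ⊆ ℝ³₊`. -/
def tree (Θ : Set ℝ) (ξ x s : ℝ) : Set (ℝ × ℝ × ℝ) :=
  {p | ∃ θ ∈ Θ, ∃ ζ σ : ℝ, |ζ| < 1 ∧ 0 < σ ∧ σ < 1 - |ζ| ∧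
        p = (ξ + θ / (s * σ), x + s * ζ, s * σ)}

/-- The `β`-strip `D_β(x, s) = {(η,y,t) : βt < β(s - |y - x|)}` (with `t > 0`). -/
def strip (β x s : ℝ) : Set (ℝ × ℝ × ℝ) :=
  {p | 0 < p.2.2 ∧ β * p.2.2 < β * (s - |p.2.1 - x|)}

/-- The counting function of a countable collection of trees with tops `c n`. -/
noncomputable def countT (c : ℕ → ℝ × ℝ × ℝ) (z : ℝ) : ℝ≥0∞ :=
  ∑' n, Set.indicator (Metric.ball (c n).2.1 (c n).2.2) (fun _ => (1 : ℝ≥0∞)) z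

/-- The counting function of a countable collection of strips with tops `d n`. -/
noncomputable def countD (d : ℕ → ℝ × ℝ) (z : ℝ) : ℝ≥0∞ :=
  ∑' n, Set.indicator (Metric.ball (d n).1 (d n).2) (fun _ => (1 : ℝ≥0∞)) z

/-- The forest outer measure `μ¹_Θ` (the `L¹` norm of the counting function). -/
noncomputable def mu1 (Θ : Set ℝ) (E : Set (ℝ × ℝ × ℝ)) : ℝ≥0∞ :=
  ⨅ (c : ℕ → ℝ × ℝ × ℝ) (_ : E ⊆ ⋃ n, tree Θ (c n).1 (c n).2.1 (c n).2.2),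
    ∫⁻ z : ℝ, countT c z

/-- The forest outer measure `μ^∞_Θ` (the `L^∞` norm of the counting function). -/
noncomputable def muInf (Θ : Set ℝ) (E : Set (ℝ × ℝ × ℝ)) : ℝ≥0∞ :=
  ⨅ (c : ℕ → ℝ × ℝ × ℝ) (_ : E ⊆ ⋃ n, tree Θ (c n).1 (c n).2.1 (c n).2.2),
    essSup (countT c) volume

/-- The strip outer measure `ν_β`. -/
noncomputable def nuMeasure (β : ℝ) (E : Set (ℝ × ℝ × ℝ)) : ℝ≥0∞ :=
  ⨅ (d : ℕ → ℝ × ℝ) (_ : E ⊆ ⋃ n, strip β (d n).1 (d n).2),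
    ∫⁻ z : ℝ, countD d z



lemma countT_lintegral (c : ℕ → ℝ × ℝ × ℝ) :
    ∫⁻ z : ℝ, countT c z = ∑' n, volume (Metric.ball (c n).2.1 (c n).2.2) := by
  unfold countT
  rw [lintegral_tsum (fun n => (measurable_const.indicator measurableSet_ball).aemeasurable)]
  refine tsum_congr fun n => ?_
  rw [lintegral_indicator measurableSet_ball, setLIntegral_const, one_mul]

lemma countD_lintegral (d : ℕ → ℝ × ℝ) :
    ∫⁻ z : ℝ, countD d z = ∑' n, volume (Metric.ball (d n).1 (d n).2) := by
  unfold countD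
  rw [lintegral_tsum (fun n => (measurable_const.indicator measurableSet_ball).aemeasurable)]
  refine tsum_congr fun n => ?_
  rw [lintegral_indicator measurableSet_ball, setLIntegral_const, one_mul]

lemma countD_measurable (d : ℕ → ℝ × ℝ) : Measurable (countD d) :=
  Measurable.ennreal_tsum fun n => measurable_const.indicator measurableSet_ball

lemma lintegral_mul_le_essSup (f g : ℝ → ℝ≥0∞) (hg : Measurable g) :
    ∫⁻ z : ℝ, f z * g z ≤ essSup f volume * ∫⁻ z : ℝ, g z := by
  calc ∫⁻ z : ℝ, f z * g z ≤ ∫⁻ z : ℝ, essSup f volume * g z := by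
        refine lintegral_mono_ae ((ae_le_essSup (f := f)).mono fun z h => ?_)
        exact mul_le_mul_left h _
    _ = essSup f volume * ∫⁻ z : ℝ, g z := lintegral_const_mul _ hg

/-- Geometric key lemma. -/
lemma tree_inter_strip_subset {β : ℝ} (hβ : 0 < β) (Θ : Set ℝ) (ξ x s x' s' : ℝ) :
    tree Θ ξ x s ∩ strip β x' s' ⊆
      tree Θ ξ ((max (x - s) (x' - s') + min (x + s) (x' + s')) / 2)
        (min (x + s) (x' + s') - max (x - s) (x' - s')) := by
  rintro p ⟨⟨θ, hθ, ζ, σ, hζ, hσ0, hσ1, rfl⟩, hpt, hstrip⟩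
  simp only [strip, Set.mem_setOf_eq] at hpt hstrip
  set a : ℝ := max (x - s) (x' - s') with ha
  set b : ℝ := min (x + s) (x' + s') with hb
  set t : ℝ := s * σ with htdef
  set y : ℝ := x + s * ζ with hydef
  have ht : 0 < t := hpt
  have hs : 0 < s := by nlinarith
  have hyx : |y - x| < s - t := by
    have : |y - x| = s * |ζ| := by
      rw [hydef]; rw [show x + s * ζ - x = s * ζ by ring, abs_mul, abs_of_pos hs]
    rw [this]
    nlinarith [abs_nonneg ζ]
  have hyx' : |y - x'| < s' - t := by
    have := (mul_lt_mul_iff_right₀ hβ).mp hstrip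
    linarith
  have h1 := abs_lt.mp hyx
  have h2 := abs_lt.mp hyx'
  have hay : a < y - t := max_lt (by linarith) (by linarith)
  have hyb : y + t < b := lt_min (by linarith) (by linarith)
  have hba : 0 < b - a := by linarith
  set m : ℝ := (a + b) / 2 with hm
  have hym : |y - m| < (b - a) / 2 - t := by
    rw [abs_lt, hm]; constructor <;> linarith
  refine ⟨θ, hθ, (y - m) / (b - a), t / (b - a), ?_, ?_, ?_, ?_⟩
  · rw [abs_div, abs_of_pos hba, div_lt_one hba]
    have := abs_nonneg (y - m); linarith
  · exact div_pos ht hba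
  · rw [abs_div, abs_of_pos hba, lt_sub_iff_add_lt, ← add_div, div_lt_one hba]
    have := abs_nonneg (y - m); linarith
  · have hc1 : (b - a) * (t / (b - a)) = t := by field_simp
    have hc2 : m + (b - a) * ((y - m) / (b - a)) = y := by field_simp; ring
    rw [hc1, hc2]

lemma key_cover {β : ℝ} (hβ : 0 < β) (Θ : Set ℝ) (c : ℕ → ℝ × ℝ × ℝ) (d : ℕ → ℝ × ℝ) :
    ∃ c' : ℕ → ℝ × ℝ × ℝ,
      ((⋃ n, tree Θ (c n).1 (c n).2.1 (c n).2.2) ∩ (⋃ m, strip β (d m).1 (d m).2)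
        ⊆ ⋃ k, tree Θ (c' k).1 (c' k).2.1 (c' k).2.2) ∧
      ∫⁻ z : ℝ, countT c' z ≤ 2 * (essSup (countT c) volume * ∫⁻ z : ℝ, countD d z) := by
  set f : ℕ × ℕ → ℝ × ℝ × ℝ := fun q =>
    ((c q.1).1,
      ((max ((c q.1).2.1 - (c q.1).2.2) ((d q.2).1 - (d q.2).2) +
        min ((c q.1).2.1 + (c q.1).2.2) ((d q.2).1 + (d q.2).2)) / 2,
       min ((c q.1).2.1 + (c q.1).2.2) ((d q.2).1 + (d q.2).2) -
        max ((c q.1).2.1 - (c q.1).2.2) ((d q.2).1 - (d q.2).2))) with hf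
  refine ⟨fun k => f (Nat.pairEquiv.symm k), ?_, ?_⟩
  · rintro p ⟨hpW, hpV⟩
    obtain ⟨n, hn⟩ := Set.mem_iUnion.mp hpW
    obtain ⟨m, hm⟩ := Set.mem_iUnion.mp hpV
    refine Set.mem_iUnion.mpr ⟨Nat.pairEquiv (n, m), ?_⟩
    have h := tree_inter_strip_subset hβ Θ (c n).1 (c n).2.1 (c n).2.2 (d m).1 (d m).2 ⟨hn, hm⟩
    simpa [hf] using h
  · have hcalc : ∫⁻ z : ℝ, countT (fun k => f (Nat.pairEquiv.symm k)) z
        = ∑' q : ℕ × ℕ, volume (Metric.ball (f q).2.1 (f q).2.2) := by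
      rw [countT_lintegral]
      exact Equiv.tsum_eq Nat.pairEquiv.symm (fun q => volume (Metric.ball (f q).2.1 (f q).2.2))
    have hterm : ∀ q : ℕ × ℕ, volume (Metric.ball (f q).2.1 (f q).2.2)
        = 2 * volume (Metric.ball (c q.1).2.1 (c q.1).2.2 ∩ Metric.ball (d q.2).1 (d q.2).2) := by
      intro q
      rw [Real.volume_ball, Real.ball_eq_Ioo, Real.ball_eq_Ioo, Set.Ioo_inter_Ioo, Real.volume_Ioo,
        ENNReal.ofReal_mul (by norm_num : (0:ℝ) ≤ 2)]
      norm_num [hf]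
    have hIJ : ∀ n m : ℕ, volume (Metric.ball (c n).2.1 (c n).2.2 ∩ Metric.ball (d m).1 (d m).2)
        = ∫⁻ z : ℝ, (Metric.ball (c n).2.1 (c n).2.2).indicator (fun _ => (1:ℝ≥0∞)) z *
                    (Metric.ball (d m).1 (d m).2).indicator (fun _ => (1:ℝ≥0∞)) z := by
      intro n m
      simp_rw [← Set.inter_indicator_mul]
      rw [lintegral_indicator (measurableSet_ball.inter measurableSet_ball)]
      simp
    calc ∫⁻ z : ℝ, countT (fun k => f (Nat.pairEquiv.symm k)) z
        = ∑' q : ℕ × ℕ, volume (Metric.ball (f q).2.1 (f q).2.2) := hcalc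
      _ = 2 * ∑' (n : ℕ) (m : ℕ),
            volume (Metric.ball (c n).2.1 (c n).2.2 ∩ Metric.ball (d m).1 (d m).2) := by
          simp_rw [hterm]
          rw [ENNReal.tsum_mul_left]
          congr 1
          exact ENNReal.tsum_prod (f := fun n m => volume (Metric.ball (c n).2.1 (c n).2.2 ∩ Metric.ball (d m).1 (d m).2))
      _ = 2 * ∫⁻ z : ℝ, countT c z * countD d z := by
          congr 1
          simp_rw [hIJ]
          have hmeas : ∀ n m : ℕ, Measurable fun z : ℝ =>
              (Metric.ball (c n).2.1 (c n).2.2).indicator (fun _ => (1:ℝ≥0∞)) z *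
              (Metric.ball (d m).1 (d m).2).indicator (fun _ => (1:ℝ≥0∞)) z :=
            fun n m => (measurable_const.indicator measurableSet_ball).mul
              (measurable_const.indicator measurableSet_ball)
          calc ∑' (n : ℕ) (m : ℕ), ∫⁻ z : ℝ,
                (Metric.ball (c n).2.1 (c n).2.2).indicator (fun _ => (1:ℝ≥0∞)) z *
                (Metric.ball (d m).1 (d m).2).indicator (fun _ => (1:ℝ≥0∞)) z
              = ∑' (n : ℕ), ∫⁻ z : ℝ, ∑' (m : ℕ),
                (Metric.ball (c n).2.1 (c n).2.2).indicator (fun _ => (1:ℝ≥0∞)) z *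
                (Metric.ball (d m).1 (d m).2).indicator (fun _ => (1:ℝ≥0∞)) z :=
                tsum_congr fun n => (lintegral_tsum fun m => (hmeas n m).aemeasurable).symm
            _ = ∫⁻ z : ℝ, ∑' (n : ℕ) (m : ℕ),
                (Metric.ball (c n).2.1 (c n).2.2).indicator (fun _ => (1:ℝ≥0∞)) z *
                (Metric.ball (d m).1 (d m).2).indicator (fun _ => (1:ℝ≥0∞)) z :=
                (lintegral_tsum fun n =>
                  (Measurable.ennreal_tsum fun m => hmeas n m).aemeasurable).symm
            _ = ∫⁻ z : ℝ, countT c z * countD d z := by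
                refine lintegral_congr fun z => ?_
                simp_rw [ENNReal.tsum_mul_left]
                rw [ENNReal.tsum_mul_right]
                rfl
      _ ≤ 2 * (essSup (countT c) volume * ∫⁻ z : ℝ, countD d z) :=
          mul_le_mul_right (lintegral_mul_le_essSup _ _ (countD_measurable d)) 2

lemma mu1_empty' (Θ : Set ℝ) : (⨅ (c : ℕ → ℝ × ℝ × ℝ)
    (_ : (∅ : Set (ℝ × ℝ × ℝ)) ⊆ ⋃ n, tree Θ (c n).1 (c n).2.1 (c n).2.2),
    ∫⁻ z : ℝ, countT c z) = 0 := by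
  refine le_antisymm ?_ zero_le
  refine iInf₂_le_of_le (fun _ => (0, 0, 0)) (Set.empty_subset _) ?_
  rw [countT_lintegral]
  simp

lemma one_le_essSup_countT (Θ : Set ℝ) (c : ℕ → ℝ × ℝ × ℝ) (p : ℝ × ℝ × ℝ)
    (hpt : 0 < p.2.2) (hp : p ∈ ⋃ n, tree Θ (c n).1 (c n).2.1 (c n).2.2) :
    1 ≤ essSup (countT c) volume := by
  obtain ⟨n, hn⟩ := Set.mem_iUnion.mp hp
  obtain ⟨θ, hθ, ζ, σ, hζ, hσ0, hσ1, rfl⟩ := hn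
  simp only at hpt
  set s : ℝ := (c n).2.2
  set x : ℝ := (c n).2.1
  have hs : 0 < s := by nlinarith
  have hball : Metric.ball (x + s * ζ) (s * σ) ⊆ Metric.ball x s := by
    intro w hw
    rw [Metric.mem_ball, Real.dist_eq] at hw ⊢
    have h1 : |w - (x + s * ζ)| < s * σ := hw
    have h2 : |s * ζ| = s * |ζ| := by rw [abs_mul, abs_of_pos hs]
    calc |w - x| = |(w - (x + s * ζ)) + s * ζ| := by ring_nf
      _ ≤ |w - (x + s * ζ)| + |s * ζ| := abs_add_le _ _
      _ < s * σ + s * |ζ| := by rw [h2]; linarith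
      _ ≤ s := by nlinarith
  have hge : ∀ w ∈ Metric.ball (x + s * ζ) (s * σ), 1 ≤ countT c w := by
    intro w hw
    have : (Metric.ball (c n).2.1 (c n).2.2).indicator (fun _ => (1:ℝ≥0∞)) w = 1 :=
      Set.indicator_of_mem (hball hw) _
    calc (1:ℝ≥0∞) = (Metric.ball (c n).2.1 (c n).2.2).indicator (fun _ => (1:ℝ≥0∞)) w :=
          this.symm
      _ ≤ countT c w := ENNReal.le_tsum n
  by_contra h
  push_neg at h
  have hae : ∀ᵐ w : ℝ, countT c w < 1 :=
    (ae_le_essSup (f := countT c)).mono fun w hw => lt_of_le_of_lt hw h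
  have hnull : volume {w : ℝ | ¬ countT c w < 1} = 0 := hae
  have hsub : Metric.ball (x + s * ζ) (s * σ) ⊆ {w : ℝ | ¬ countT c w < 1} :=
    fun w hw => not_lt.mpr (hge w hw)
  have h0 : volume (Metric.ball (x + s * ζ) (s * σ)) = 0 := measure_mono_null hsub hnull
  rw [Real.volume_ball] at h0
  have : (0:ℝ) < 2 * (s * σ) := by nlinarith
  exact absurd h0 (ENNReal.ofReal_pos.mpr this).ne'

lemma countD_lower {β : ℝ} (hβ : 0 < β) (d : ℕ → ℝ × ℝ) (p : ℝ × ℝ × ℝ)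
    (hp : p ∈ ⋃ m, strip β (d m).1 (d m).2) :
    ENNReal.ofReal (2 * p.2.2) ≤ ∫⁻ z : ℝ, countD d z := by
  obtain ⟨m, hm⟩ := Set.mem_iUnion.mp hp
  obtain ⟨hpt, hlt⟩ := hm
  have hlt' : p.2.2 < (d m).2 - |p.2.1 - (d m).1| := (mul_lt_mul_iff_right₀ hβ).mp hlt
  have hle : p.2.2 ≤ (d m).2 := by
    have := abs_nonneg (p.2.1 - (d m).1); linarith
  rw [countD_lintegral]
  calc ENNReal.ofReal (2 * p.2.2) ≤ volume (Metric.ball (d m).1 (d m).2) := by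
        rw [Real.volume_ball]; exact ENNReal.ofReal_le_ofReal (by linarith)
    _ ≤ ∑' k, volume (Metric.ball (d k).1 (d k).2) := ENNReal.le_tsum m

/-- tree–strip measure comparison:
`μ¹_Θ(W ∩ V) ≤ 4 β⁻¹ ν_β(V) μ^∞_Θ(W ∩ V)`. -/
theorem tree_strip_measure_comparison (β : ℝ) (hβ : β ∈ Set.Ioc (0:ℝ) 1)
    (Θ : Set ℝ) (V W : Set (ℝ × ℝ × ℝ))
    (hV : ∃ d : ℕ → ℝ × ℝ, V = ⋃ n, strip β (d n).1 (d n).2)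
    (hW : ∃ c : ℕ → ℝ × ℝ × ℝ, W = ⋃ n, tree Θ (c n).1 (c n).2.1 (c n).2.2) :
    mu1 Θ (W ∩ V) ≤ ENNReal.ofReal (4 / β) * nuMeasure β V * muInf Θ (W ∩ V) := by
  obtain ⟨hβ0, hβ1⟩ := hβ
  by_cases hne : W ∩ V = ∅
  · rw [hne]
    have h0 : mu1 Θ (∅ : Set (ℝ × ℝ × ℝ)) = 0 := mu1_empty' Θ
    rw [h0]; exact zero_le
  obtain ⟨p, hpW, hpV⟩ := Set.nonempty_iff_ne_empty.mpr hne
  obtain ⟨d0, hVd⟩ := hV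
  have hpt : 0 < p.2.2 := by
    obtain ⟨m, hm⟩ := Set.mem_iUnion.mp (hVd ▸ hpV)
    exact hm.1
  set K := ENNReal.ofReal (4 / β) with hKdef
  set A := nuMeasure β V with hAdef
  set B := muInf Θ (W ∩ V) with hBdef
  have hK0 : K ≠ 0 := by
    rw [hKdef]
    exact (ENNReal.ofReal_pos.mpr (by positivity)).ne'
  have hKtop : K ≠ ∞ := ENNReal.ofReal_ne_top
  have h2K : (2 : ℝ≥0∞) ≤ K := by
    rw [hKdef, show (2:ℝ≥0∞) = ENNReal.ofReal 2 by norm_num]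
    refine ENNReal.ofReal_le_ofReal ?_
    rw [le_div_iff₀ hβ0]; linarith
  have hB1 : 1 ≤ B := by
    refine le_iInf₂ fun c hc => ?_
    exact one_le_essSup_countT Θ c p hpt (hc ⟨hpW, hpV⟩)
  have hA0 : A ≠ 0 := by
    have : ENNReal.ofReal (2 * p.2.2) ≤ A := by
      refine le_iInf₂ fun d hd => ?_
      exact countD_lower hβ0 d p (hd hpV)
    intro h
    rw [h, le_zero_iff, ENNReal.ofReal_eq_zero] at this
    linarith
  have hB0 : B ≠ 0 := by intro h; rw [h] at hB1; exact absurd hB1 (by simp)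
  have key : ∀ (dd : ℕ → ℝ × ℝ) (_ : V ⊆ ⋃ m, strip β (dd m).1 (dd m).2)
      (cc : ℕ → ℝ × ℝ × ℝ) (_ : W ∩ V ⊆ ⋃ n, tree Θ (cc n).1 (cc n).2.1 (cc n).2.2),
      mu1 Θ (W ∩ V) ≤ 2 * (essSup (countT cc) volume * ∫⁻ z : ℝ, countD dd z) := by
    intro dd hdd cc hcc
    obtain ⟨c', hsub, hle⟩ := key_cover hβ0 Θ cc dd
    have hcov : W ∩ V ⊆ ⋃ k, tree Θ (c' k).1 (c' k).2.1 (c' k).2.2 :=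
      fun z hz => hsub ⟨hcc hz, hdd hz.2⟩
    exact le_trans (iInf₂_le c' hcov) hle
  by_cases hAtop : A = ∞
  · rw [hAtop, ENNReal.mul_top hK0, ENNReal.top_mul hB0]; exact le_top
  by_cases hBtop : B = ∞
  · rw [hBtop, ENNReal.mul_top (mul_ne_zero hK0 hA0)]; exact le_top
  refine ENNReal.le_of_forall_pos_le_add fun ε hε _ => ?_
  set M := K * (A + B + 1) with hMdef
  have hM0 : M ≠ 0 := mul_ne_zero hK0 (by simp)
  have hMtop : M ≠ ∞ := ENNReal.mul_ne_top hKtop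
    (ENNReal.add_ne_top.mpr ⟨ENNReal.add_ne_top.mpr ⟨hAtop, hBtop⟩, ENNReal.one_ne_top⟩)
  set δ := min 1 ((ε : ℝ≥0∞) / M) with hδdef
  have hδ0 : δ ≠ 0 := by
    refine (lt_min one_pos (ENNReal.div_pos ?_ hMtop)).ne'
    exact_mod_cast hε.ne'
  have hδ1 : δ ≤ 1 := min_le_left _ _
  have hAlt : A < A + δ := ENNReal.lt_add_right hAtop hδ0
  have hBlt : B < B + δ := ENNReal.lt_add_right hBtop hδ0
  have hAlt' : (⨅ (d : ℕ → ℝ × ℝ) (_ : V ⊆ ⋃ n, strip β (d n).1 (d n).2),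
      ∫⁻ z : ℝ, countD d z) < A + δ := hAlt
  obtain ⟨dd, hdd2⟩ := iInf_lt_iff.mp hAlt'
  obtain ⟨hdd, hddle⟩ := iInf_lt_iff.mp hdd2
  have hBlt' : (⨅ (c : ℕ → ℝ × ℝ × ℝ)
      (_ : W ∩ V ⊆ ⋃ n, tree Θ (c n).1 (c n).2.1 (c n).2.2),
      essSup (countT c) volume) < B + δ := hBlt
  obtain ⟨cc, hcc2⟩ := iInf_lt_iff.mp hBlt'
  obtain ⟨hcc, hccle⟩ := iInf_lt_iff.mp hcc2
  have expand : K * ((B + δ) * (A + δ)) = K * A * B + δ * (K * (B + A + δ)) := by ring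
  calc mu1 Θ (W ∩ V) ≤ 2 * (essSup (countT cc) volume * ∫⁻ z : ℝ, countD dd z) :=
        key dd hdd cc hcc
    _ ≤ K * ((B + δ) * (A + δ)) :=
        mul_le_mul' h2K (mul_le_mul' hccle.le hddle.le)
    _ = K * A * B + δ * (K * (B + A + δ)) := expand
    _ ≤ K * A * B + δ * M := by
        refine add_le_add_right (mul_le_mul' le_rfl ?_) _
        rw [hMdef]
        refine mul_le_mul' le_rfl ?_
        calc B + A + δ ≤ B + A + 1 := add_le_add_right hδ1 _
          _ = A + B + 1 := by ring
    _ ≤ K * A * B + ε := by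
        refine add_le_add_right ?_ _
        calc δ * M ≤ ((ε : ℝ≥0∞) / M) * M := mul_le_mul' (min_le_right _ _) le_rfl
          _ = ε := ENNReal.div_mul_cancel hM0 hMtop
end

section
/- Boundary structure of generating sets: let V be a countable union of β-strips, W₁,…,W_k countable unions of trees, and E = V ∩ (∩ W_l) or E = V ∪ (∪ W_l). Then there is a locally Lipschitz function b_E: ℝ² → [0,∞] such that E = {(η,y,t) ∈ ℝ³₊ : 0 < t < b_E(η,y)}, and b_E satisfies |∂_y b_E(η,y)| ≤ β^{-1} and b_E(η,y)/(-θ₊) ≤ ∂_η b_E(η,y)/b_E(η,y) ≤ b_E(η,y)/(-θ₋), where Θ = (θ₋, θ₊). -/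
open MeasureTheory
open scoped ENNReal

namespace BoundaryAux

/-! ### Generalities on `ℝ≥0∞` -/

lemma ofr_le_add {u v w : ℝ} (h : u ≤ v + w) :
    ENNReal.ofReal u ≤ ENNReal.ofReal v + ENNReal.ofReal w :=
  (ENNReal.ofReal_le_ofReal h).trans ENNReal.ofReal_add_le

lemma inv_min' (a b : ℝ≥0∞) : (min a b)⁻¹ = max a⁻¹ b⁻¹ := by
  rcases le_total a b with h | h
  · rw [min_eq_left h, max_eq_left (ENNReal.inv_le_inv.mpr h)]
  · rw [min_eq_right h, max_eq_right (ENNReal.inv_le_inv.mpr h)]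

lemma inv_max' (a b : ℝ≥0∞) : (max a b)⁻¹ = min a⁻¹ b⁻¹ := by
  rcases le_total a b with h | h
  · rw [max_eq_right h, min_eq_right (ENNReal.inv_le_inv.mpr h)]
  · rw [max_eq_left h, min_eq_left (ENNReal.inv_le_inv.mpr h)]

lemma lt_iInf_fin {k : ℕ} (f : Fin k → ℝ≥0∞) {t : ℝ≥0∞} (ht : t ≠ ⊤) :
    t < ⨅ l, f l ↔ ∀ l, t < f l := by
  constructor
  · exact fun h l => h.trans_le (iInf_le _ _)
  · intro h
    rcases Nat.eq_zero_or_pos k with hk | hk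
    · subst hk
      rw [iInf_of_empty]
      exact lt_top_iff_ne_top.mpr ht
    · have : Nonempty (Fin k) := ⟨⟨0, hk⟩⟩
      obtain ⟨l₀, hl₀⟩ := Finite.exists_min f
      have he : ⨅ l, f l = f l₀ := le_antisymm (iInf_le _ _) (le_iInf hl₀)
      rw [he]; exact h l₀

lemma ofReal_lt_inv_iff {t : ℝ} (ht : 0 < t) (a : ℝ) :
    ENNReal.ofReal t < (ENNReal.ofReal a)⁻¹ ↔ t * a < 1 := by
  rcases le_or_gt a 0 with ha | ha
  · rw [ENNReal.ofReal_eq_zero.mpr ha]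
    simp only [ENNReal.inv_zero]
    constructor
    · intro _
      nlinarith [mul_nonpos_of_nonpos_of_nonneg ha ht.le]
    · intro _
      exact ENNReal.ofReal_lt_top
  · rw [← ENNReal.ofReal_inv_of_pos ha,
      ENNReal.ofReal_lt_ofReal_iff (by positivity)]
    have e1 : a * a⁻¹ = 1 := mul_inv_cancel₀ ha.ne'
    constructor
    · intro h
      nlinarith [mul_lt_mul_of_pos_right h ha]
    · intro h
      nlinarith [mul_lt_mul_of_pos_right h (inv_pos.2 ha)]

/-! ### The two conditions -/

def CondA (β : ℝ) (b : ℝ → ℝ → ℝ≥0∞) : Prop :=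
  ∀ η y y' : ℝ, b η y ≤ b η y' + ENNReal.ofReal (β⁻¹ * |y - y'|)

def CondB (θm θp : ℝ) (b : ℝ → ℝ → ℝ≥0∞) : Prop :=
  ∀ y η η' : ℝ, η ≤ η' →
    (b η' y)⁻¹ ≤ (b η y)⁻¹ + ENNReal.ofReal ((η' - η) / θp) ∧
    (b η y)⁻¹ ≤ (b η' y)⁻¹ + ENNReal.ofReal ((η' - η) / (-θm))

/-! ### Closure properties -/

lemma condA_min {β : ℝ} {b₁ b₂ : ℝ → ℝ → ℝ≥0∞} (h₁ : CondA β b₁) (h₂ : CondA β b₂) :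
    CondA β (fun η y => min (b₁ η y) (b₂ η y)) := by
  intro η y y'
  simp only
  rw [← min_add_add_right]
  exact min_le_min (h₁ η y y') (h₂ η y y')

lemma condA_max {β : ℝ} {b₁ b₂ : ℝ → ℝ → ℝ≥0∞} (h₁ : CondA β b₁) (h₂ : CondA β b₂) :
    CondA β (fun η y => max (b₁ η y) (b₂ η y)) := by
  intro η y y'
  simp only
  rw [← max_add_add_right]
  exact max_le_max (h₁ η y y') (h₂ η y y')

lemma condA_iSup {β : ℝ} {ι : Sort*} (b : ι → ℝ → ℝ → ℝ≥0∞) (h : ∀ i, CondA β (b i)) :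
    CondA β (fun η y => ⨆ i, b i η y) := by
  intro η y y'
  exact iSup_le fun i =>
    (h i η y y').trans (add_le_add_left (le_iSup (fun j => b j η y') i) _)

lemma condA_iInf {β : ℝ} {ι : Sort*} (b : ι → ℝ → ℝ → ℝ≥0∞) (h : ∀ i, CondA β (b i)) :
    CondA β (fun η y => ⨅ i, b i η y) := by
  intro η y y'
  calc ⨅ i, b i η y ≤ ⨅ i, (b i η y' + ENNReal.ofReal (β⁻¹ * |y - y'|)) :=
        iInf_mono fun i => h i η y y'
    _ = (⨅ i, b i η y') + ENNReal.ofReal (β⁻¹ * |y - y'|) := ENNReal.iInf_add.symm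

lemma condB_min {θm θp : ℝ} {b₁ b₂ : ℝ → ℝ → ℝ≥0∞}
    (h₁ : CondB θm θp b₁) (h₂ : CondB θm θp b₂) :
    CondB θm θp (fun η y => min (b₁ η y) (b₂ η y)) := by
  intro y η η' hη
  obtain ⟨h1a, h1b⟩ := h₁ y η η' hη
  obtain ⟨h2a, h2b⟩ := h₂ y η η' hη
  simp only [inv_min']
  constructor
  · exact max_le (h1a.trans (add_le_add_left (le_max_left _ _) _))
      (h2a.trans (add_le_add_left (le_max_right _ _) _))
  · exact max_le (h1b.trans (add_le_add_left (le_max_left _ _) _))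
      (h2b.trans (add_le_add_left (le_max_right _ _) _))

lemma condB_max {θm θp : ℝ} {b₁ b₂ : ℝ → ℝ → ℝ≥0∞}
    (h₁ : CondB θm θp b₁) (h₂ : CondB θm θp b₂) :
    CondB θm θp (fun η y => max (b₁ η y) (b₂ η y)) := by
  intro y η η' hη
  obtain ⟨h1a, h1b⟩ := h₁ y η η' hη
  obtain ⟨h2a, h2b⟩ := h₂ y η η' hη
  simp only [inv_max']
  constructor
  · rw [← min_add_add_right]; exact min_le_min h1a h2a
  · rw [← min_add_add_right]; exact min_le_min h1b h2b

lemma condB_iSup {θm θp : ℝ} {ι : Sort*} (b : ι → ℝ → ℝ → ℝ≥0∞)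
    (h : ∀ i, CondB θm θp (b i)) :
    CondB θm θp (fun η y => ⨆ i, b i η y) := by
  intro y η η' hη
  simp only [ENNReal.inv_iSup]
  constructor
  · calc ⨅ i, (b i η' y)⁻¹ ≤ ⨅ i, ((b i η y)⁻¹ + ENNReal.ofReal ((η' - η) / θp)) :=
        iInf_mono fun i => (h i y η η' hη).1
      _ = _ := ENNReal.iInf_add.symm
  · calc ⨅ i, (b i η y)⁻¹ ≤ ⨅ i, ((b i η' y)⁻¹ + ENNReal.ofReal ((η' - η) / (-θm))) :=
        iInf_mono fun i => (h i y η η' hη).2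
      _ = _ := ENNReal.iInf_add.symm

lemma condB_iInf {θm θp : ℝ} {ι : Sort*} (b : ι → ℝ → ℝ → ℝ≥0∞)
    (h : ∀ i, CondB θm θp (b i)) :
    CondB θm θp (fun η y => ⨅ i, b i η y) := by
  intro y η η' hη
  simp only [ENNReal.inv_iInf]
  constructor
  · exact iSup_le fun i =>
      ((h i y η η' hη).1).trans (add_le_add_left (le_iSup (fun j => (b j η y)⁻¹) i) _)
  · exact iSup_le fun i =>
      ((h i y η η' hη).2).trans (add_le_add_left (le_iSup (fun j => (b j η' y)⁻¹) i) _)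

/-! ### Strips -/

noncomputable def stripFun (x s : ℝ) : ℝ → ℝ → ℝ≥0∞ := fun _ y => ENNReal.ofReal (s - |y - x|)

lemma condA_strip {β : ℝ} (hβ0 : 0 < β) (hβ1 : β ≤ 1) (x s : ℝ) :
    CondA β (stripFun x s) := by
  intro η y y'
  refine ofr_le_add ?_
  have h1 : |y' - x| - |y - x| ≤ |y - y'| := by
    have := abs_sub_abs_le_abs_sub (y' - x) (y - x)
    have e : |y' - x - (y - x)| = |y - y'| := by
      rw [show y' - x - (y - x) = -(y - y') by ring, abs_neg]
    linarith [e ▸ this]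
  have hinv : 1 ≤ β⁻¹ := (le_inv_comm₀ one_pos hβ0).mpr (by simpa using hβ1)
  have h2 : 1 * |y - y'| ≤ β⁻¹ * |y - y'| :=
    mul_le_mul_of_nonneg_right hinv (abs_nonneg (y - y'))
  rw [one_mul] at h2
  linarith

lemma condB_strip (θm θp x s : ℝ) : CondB θm θp (stripFun x s) :=
  fun _ _ _ _ => ⟨le_self_add, le_self_add⟩

lemma mem_strip_iff {β : ℝ} (hβ0 : 0 < β) (x s : ℝ) (p : ℝ × ℝ × ℝ) :
    p ∈ strip β x s ↔ 0 < p.2.2 ∧ ENNReal.ofReal p.2.2 < stripFun x s p.1 p.2.1 := by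
  unfold strip stripFun
  simp only [Set.mem_setOf_eq]
  constructor
  · rintro ⟨ht, h⟩
    exact ⟨ht, (ENNReal.ofReal_lt_ofReal_iff_of_nonneg ht.le).mpr
      ((mul_lt_mul_iff_right₀ hβ0).mp h)⟩
  · rintro ⟨ht, h⟩
    exact ⟨ht, (mul_lt_mul_iff_right₀ hβ0).mpr
      ((ENNReal.ofReal_lt_ofReal_iff_of_nonneg ht.le).mp h)⟩

/-! ### Trees -/

noncomputable def fEta (θm θp ξ η : ℝ) : ℝ :=
  if ξ ≤ η then (η - ξ) / θp else (η - ξ) / θm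

noncomputable def treeFun (θm θp ξ x s : ℝ) : ℝ → ℝ → ℝ≥0∞ := fun η y =>
  min (ENNReal.ofReal (s - |y - x|)) (ENNReal.ofReal (fEta θm θp ξ η))⁻¹

lemma div_nonneg_of_nonpos_of_nonpos' {a b : ℝ} (ha : a ≤ 0) (hb : b ≤ 0) : 0 ≤ a / b := by
  have := div_nonneg (neg_nonneg.2 ha) (neg_nonneg.2 hb)
  rwa [neg_div_neg_eq] at this

lemma fEta_R1 {θm θp : ℝ} (hθm : θm < 0) (hθp : 0 < θp) (ξ : ℝ) {η η' : ℝ} (hη : η ≤ η') :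
    fEta θm θp ξ η' ≤ fEta θm θp ξ η + (η' - η) / θp := by
  unfold fEta
  split_ifs with h1 h2 h2
  · have e : (η - ξ) / θp + (η' - η) / θp = (η' - ξ) / θp := by ring
    linarith
  · have f1 : (η - ξ) / θp ≤ 0 :=
      div_nonpos_of_nonpos_of_nonneg (by linarith) hθp.le
    have f2 : (0:ℝ) ≤ (η - ξ) / θm :=
      div_nonneg_of_nonpos_of_nonpos' (by linarith) hθm.le
    have e : (η - ξ) / θp + (η' - η) / θp = (η' - ξ) / θp := by ring
    linarith
  · exact absurd (h2.trans hη) h1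
  · have e : (η' - ξ) / θm - (η - ξ) / θm = (η' - η) / θm := by ring
    have f1 : (η' - η) / θm ≤ 0 :=
      div_nonpos_of_nonneg_of_nonpos (by linarith) hθm.le
    have f2 : (0:ℝ) ≤ (η' - η) / θp := div_nonneg (by linarith) hθp.le
    linarith

lemma fEta_R2 {θm θp : ℝ} (hθm : θm < 0) (hθp : 0 < θp) (ξ : ℝ) {η η' : ℝ} (hη : η ≤ η') :
    fEta θm θp ξ η ≤ fEta θm θp ξ η' + (η' - η) / (-θm) := by
  unfold fEta
  split_ifs with h1 h2 h2
  · have e : (η - ξ) / θp - (η' - ξ) / θp = (η - η') / θp := by ring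
    have f1 : (η - η') / θp ≤ 0 :=
      div_nonpos_of_nonpos_of_nonneg (by linarith) hθp.le
    have f2 : (0:ℝ) ≤ (η' - η) / (-θm) := div_nonneg (by linarith) (by linarith)
    linarith
  · exact absurd (h1.trans hη) h2
  · -- η < ξ ≤ η'
    have e : (η - ξ) / θm = (ξ - η) / (-θm) := by ring
    have f1 : (ξ - η) / (-θm) ≤ (η' - η) / (-θm) :=
      (div_le_div_iff_of_pos_right (by linarith)).mpr (by linarith)
    have f2 : (0:ℝ) ≤ (η' - ξ) / θp := div_nonneg (by linarith) hθp.le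
    linarith
  · have e : (η' - ξ) / θm + (η' - η) / (-θm) = (η - ξ) / θm := by ring
    linarith

lemma condA_tree {β θm θp : ℝ} (hβ0 : 0 < β) (hβ1 : β ≤ 1) (ξ x s : ℝ) :
    CondA β (treeFun θm θp ξ x s) := by
  have h2 : CondA β (fun η _ => (ENNReal.ofReal (fEta θm θp ξ η))⁻¹) :=
    fun _ _ _ => le_self_add
  exact condA_min (condA_strip hβ0 hβ1 x s) h2

lemma condB_tree {θm θp : ℝ} (hθm : θm < 0) (hθp : 0 < θp) (ξ x s : ℝ) :
    CondB θm θp (treeFun θm θp ξ x s) := by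
  have h1 : CondB θm θp (stripFun x s) := condB_strip θm θp x s
  have h2 : CondB θm θp (fun η _ => (ENNReal.ofReal (fEta θm θp ξ η))⁻¹) := by
    intro y η η' hη
    simp only [inv_inv]
    exact ⟨ofr_le_add (fEta_R1 hθm hθp ξ hη), ofr_le_add (fEta_R2 hθm hθp ξ hη)⟩
  exact condB_min h1 h2

lemma treeFun_lt_iff {θm θp : ℝ} (hθm : θm < 0) (hθp : 0 < θp) (ξ x s η y : ℝ)
    {t : ℝ} (ht : 0 < t) :
    ENNReal.ofReal t < treeFun θm θp ξ x s η y ↔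
      t < s - |y - x| ∧ θm < (η - ξ) * t ∧ (η - ξ) * t < θp := by
  unfold treeFun fEta
  rw [lt_min_iff, ENNReal.ofReal_lt_ofReal_iff_of_nonneg ht.le, ofReal_lt_inv_iff ht]
  split_ifs with h
  · rw [← mul_div_assoc, div_lt_one hθp]
    constructor
    · rintro ⟨h1, h2⟩
      have h3 : (0:ℝ) ≤ (η - ξ) * t := mul_nonneg (by linarith) ht.le
      exact ⟨h1, by linarith, by linarith [mul_comm t (η - ξ)]⟩
    · rintro ⟨h1, _, h3⟩
      exact ⟨h1, by linarith [mul_comm t (η - ξ)]⟩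
  · rw [← mul_div_assoc, div_lt_one_of_neg hθm]
    constructor
    · rintro ⟨h1, h2⟩
      have h3 : (η - ξ) * t ≤ 0 :=
        mul_nonpos_of_nonpos_of_nonneg (by linarith) ht.le
      exact ⟨h1, by linarith [mul_comm t (η - ξ)], by linarith⟩
    · rintro ⟨h1, h2, _⟩
      exact ⟨h1, by linarith [mul_comm t (η - ξ)]⟩

lemma mem_tree_iff {θm θp : ℝ} (hθm : θm < 0) (hθp : 0 < θp) {s : ℝ} (hs : 0 < s)
    (ξ x : ℝ) (p : ℝ × ℝ × ℝ) :
    p ∈ tree (Set.Ioo θm θp) ξ x s ↔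
      0 < p.2.2 ∧ ENNReal.ofReal p.2.2 < treeFun θm θp ξ x s p.1 p.2.1 := by
  obtain ⟨η, y, t⟩ := p
  simp only [tree, Set.mem_setOf_eq, Set.mem_Ioo]
  constructor
  · rintro ⟨θ, ⟨hθ1, hθ2⟩, ζ, σ, hζ, hσ0, hσ1, heq⟩
    injection heq with e1 e23
    injection e23 with e2 e3
    subst e1; subst e2; subst e3
    have hsσ : 0 < s * σ := mul_pos hs hσ0
    refine ⟨hsσ, ?_⟩
    rw [treeFun_lt_iff hθm hθp _ _ _ _ _ hsσ]
    have e1 : (ξ + θ / (s * σ) - ξ) * (s * σ) = θ := by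
      field_simp
      ring
    have e2 : |x + s * ζ - x| = s * |ζ| := by
      rw [add_sub_cancel_left, abs_mul, abs_of_pos hs]
    refine ⟨?_, by rw [e1]; exact hθ1, by rw [e1]; exact hθ2⟩
    rw [e2]
    nlinarith [abs_nonneg ζ]
  · rintro ⟨ht, hlt⟩
    rw [treeFun_lt_iff hθm hθp _ _ _ _ _ ht] at hlt
    obtain ⟨h1, h2, h3⟩ := hlt
    have habs : |y - x| < s := by
      have := abs_nonneg (y - x); linarith
    refine ⟨(η - ξ) * t, ⟨h2, h3⟩, (y - x) / s, t / s, ?_, by positivity, ?_, ?_⟩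
    · rw [abs_div, abs_of_pos hs, div_lt_one hs]
      exact habs
    · rw [abs_div, abs_of_pos hs, lt_sub_iff_add_lt, ← add_div, div_lt_one hs]
      linarith
    · have hts : s * (t / s) = t := by field_simp
      simp only [Prod.mk.injEq, hts]
      refine ⟨?_, ?_, trivial⟩
      · field_simp; ring
      · field_simp; ring

lemma region_iUnion {ι : Sort*} (S : ι → Set (ℝ × ℝ × ℝ)) (b : ι → ℝ → ℝ → ℝ≥0∞)
    (h : ∀ i p, p ∈ S i ↔ 0 < p.2.2 ∧ ENNReal.ofReal p.2.2 < b i p.1 p.2.1) :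
    ∀ p, p ∈ ⋃ i, S i ↔ 0 < p.2.2 ∧ ENNReal.ofReal p.2.2 < ⨆ i, b i p.1 p.2.1 := by
  intro p
  simp only [Set.mem_iUnion, h, lt_iSup_iff]
  constructor
  · rintro ⟨i, ht, hi⟩; exact ⟨ht, i, hi⟩
  · rintro ⟨ht, i, hi⟩; exact ⟨i, ht, hi⟩

end BoundaryAux

open BoundaryAux in
/-- boundary structure of generating sets.  If `E` is an intersection
`V ∩ (⋂ W_l)` or union `V ∪ (⋃ W_l)` of a countable union of `β`-strips `V` and
finitely many countable unions of trees `W_l`, then `E` is the open region below the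
graph of a function `b : ℝ² → [0,∞]` satisfying `|∂_y b| ≤ β⁻¹` and
`b/(-θ₊) ≤ ∂_η b / b ≤ b/(-θ₋)` (stated in integrated form). -/
theorem boundary_structure (β θm θp : ℝ) (hβ : β ∈ Set.Ioc (0:ℝ) 1)
    (hθm : θm ≤ -4) (hθp : 4 ≤ θp) (k : ℕ)
    (V : Set (ℝ × ℝ × ℝ)) (W : Fin k → Set (ℝ × ℝ × ℝ))
    (hV : ∃ d : ℕ → ℝ × ℝ, V = ⋃ n, strip β (d n).1 (d n).2)
    (hW : ∀ l, ∃ c : ℕ → ℝ × ℝ × ℝ, (∀ n, 0 < (c n).2.2) ∧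
      W l = ⋃ n, tree (Set.Ioo θm θp) (c n).1 (c n).2.1 (c n).2.2)
    (E : Set (ℝ × ℝ × ℝ))
    (hE : E = V ∩ ⋂ l, W l ∨ E = V ∪ ⋃ l, W l) :
    ∃ b : ℝ → ℝ → ℝ≥0∞,
      E = {p : ℝ × ℝ × ℝ | 0 < p.2.2 ∧ ENNReal.ofReal p.2.2 < b p.1 p.2.1} ∧
      (∀ η y y' : ℝ, b η y ≤ b η y' + ENNReal.ofReal (β⁻¹ * |y - y'|)) ∧
      (∀ y η η' : ℝ, η ≤ η' →
        (b η' y)⁻¹ ≤ (b η y)⁻¹ + ENNReal.ofReal ((η' - η) / θp) ∧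
        (b η y)⁻¹ ≤ (b η' y)⁻¹ + ENNReal.ofReal ((η' - η) / (-θm))) := by
  obtain ⟨hβ0, hβ1⟩ := hβ
  have hθm0 : θm < 0 := by linarith
  have hθp0 : 0 < θp := by linarith
  obtain ⟨d, hVd⟩ := hV
  choose c hc0 hcW using hW
  set bV : ℝ → ℝ → ℝ≥0∞ :=
    fun η y => ⨆ n, stripFun (d n).1 (d n).2 η y with hbVdef
  set bW : Fin k → ℝ → ℝ → ℝ≥0∞ :=
    fun l η y => ⨆ n, treeFun θm θp (c l n).1 (c l n).2.1 (c l n).2.2 η y with hbWdef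
  have hVmem : ∀ p, p ∈ V ↔ 0 < p.2.2 ∧ ENNReal.ofReal p.2.2 < bV p.1 p.2.1 := by
    rw [hVd]
    exact region_iUnion _ _ (fun n p => mem_strip_iff hβ0 _ _ p)
  have hWmem : ∀ l p, p ∈ W l ↔ 0 < p.2.2 ∧ ENNReal.ofReal p.2.2 < bW l p.1 p.2.1 := by
    intro l
    rw [hcW l]
    exact region_iUnion _ _ (fun n p => mem_tree_iff hθm0 hθp0 (hc0 l n) _ _ p)
  have hAV : CondA β bV := condA_iSup _ fun n => condA_strip hβ0 hβ1 _ _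
  have hBV : CondB θm θp bV := condB_iSup _ fun n => condB_strip _ _ _ _
  have hAW : ∀ l, CondA β (bW l) :=
    fun l => condA_iSup _ fun n => condA_tree hβ0 hβ1 _ _ _
  have hBW : ∀ l, CondB θm θp (bW l) :=
    fun l => condB_iSup _ fun n => condB_tree hθm0 hθp0 _ _ _
  rcases hE with rfl | rfl
  · refine ⟨fun η y => min (bV η y) (⨅ l, bW l η y),
      ?_, condA_min hAV (condA_iInf _ hAW), condB_min hBV (condB_iInf _ hBW)⟩
    ext p
    simp only [Set.mem_inter_iff, Set.mem_iInter, hVmem, hWmem, Set.mem_setOf_eq,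
      lt_min_iff]
    constructor
    · rintro ⟨⟨ht, h1⟩, h2⟩
      exact ⟨ht, h1, (lt_iInf_fin _ ENNReal.ofReal_ne_top).mpr fun l => (h2 l).2⟩
    · rintro ⟨ht, h1, h2⟩
      exact ⟨⟨ht, h1⟩, fun l =>
        ⟨ht, ((lt_iInf_fin _ ENNReal.ofReal_ne_top).mp h2) l⟩⟩
  · refine ⟨fun η y => max (bV η y) (⨆ l, bW l η y),
      ?_, condA_max hAV (condA_iSup _ hAW), condB_max hBV (condB_iSup _ hBW)⟩
    ext p
    simp only [Set.mem_union, Set.mem_iUnion, hVmem, hWmem, Set.mem_setOf_eq,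
      lt_max_iff, lt_iSup_iff]
    constructor
    · rintro (⟨ht, h⟩ | ⟨l, ht, h⟩)
      · exact ⟨ht, Or.inl h⟩
      · exact ⟨ht, Or.inr ⟨l, h⟩⟩
    · rintro ⟨ht, h | ⟨l, h⟩⟩
      · exact Or.inl ⟨ht, h⟩
      · exact Or.inr ⟨l, ht, h⟩
end
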